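/- arXiv:1704.07824 — 17 statements merged into one kernel-verified Lean document; each statement's English description precedes it below -/
import Mathlib

section
/- Every infinite metric space (X,d) whose scale d(X,X) = {d(x,y) : x,y ∈ X} is finite contains a countably infinite equidistance subset. -/
/-- A subset `Y` of a metric space is an equidistance subset if there is `r > 0`
such that any two distinct points of `Y` are at distance `r`. -/
def EquidistanceSubset {X : Type*} [MetricSpace X] (Y : Set X) : Prop :=
  ∃ r : ℝ, 0 < r ∧ ∀ x ∈ Y, ∀ y ∈ Y, x ≠ y → dist x y = r

/-- Infinite Ramsey theorem for pairs with a symmetric coloring. -/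
theorem ramsey_pairs {X : Type*} [Infinite X] {C : Type*} [Finite C]
    (c : X → X → C) (hsymm : ∀ x y, c x y = c y x) :
    ∃ Y : Set X, Y.Countable ∧ Y.Infinite ∧
      ∃ k : C, ∀ x ∈ Y, ∀ y ∈ Y, x ≠ y → c x y = k := by
  classical
  have key : ∀ p : {A : Set X // A.Infinite}, ∃ x : X × C × Set X,
      x.1 ∈ p.1 ∧ x.2.2 ⊆ p.1 ∧ x.1 ∉ x.2.2 ∧ x.2.2.Infinite ∧
      ∀ y ∈ x.2.2, c x.1 y = x.2.1 := by
    rintro ⟨A, hA⟩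
    obtain ⟨a, ha⟩ := hA.nonempty
    have hA' : (A \ {a}).Infinite := hA.diff (Set.finite_singleton a)
    haveI : Infinite ↥(A \ {a}) := hA'.to_subtype
    obtain ⟨k, hk⟩ := Finite.exists_infinite_fiber (fun x : ↥(A \ {a}) => c a x)
    refine ⟨(a, k, Subtype.val '' ((fun x : ↥(A \ {a}) => c a x) ⁻¹' {k})),
      ha, ?_, ?_, ?_, ?_⟩
    · rintro _ ⟨x, -, rfl⟩; exact x.2.1
    · rintro ⟨x, -, hx⟩; exact x.2.2 hx
    · 
      exact ((Set.infinite_coe_iff.mp hk).image Subtype.val_injective.injOn)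
    · rintro _ ⟨x, hx, rfl⟩; exact hx
  choose step ha hsub hnotmem hinf hcol using key
  let F : ℕ → {A : Set X // A.Infinite} := fun n =>
    Nat.rec ⟨Set.univ, Set.infinite_univ⟩ (fun _ p => ⟨(step p).2.2, hinf p⟩) n
  have hFsucc : ∀ n, (F (n + 1)).1 = (step (F n)).2.2 := fun n => rfl
  set aa : ℕ → X := fun n => (step (F n)).1 with haa
  set kk : ℕ → C := fun n => (step (F n)).2.1 with hkk
  have hmono : ∀ m n, m ≤ n → (F n).1 ⊆ (F m).1 := by
    intro m n hmn
    induction n with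
    | zero => simp_all
    | succ n ih =>
      rcases Nat.lt_or_ge m (n + 1) with h | h
      · exact ((hFsucc n ▸ hsub (F n)).trans (ih (Nat.lt_succ_iff.mp h)))
      · have : m = n + 1 := le_antisymm hmn h
        subst this; exact subset_rfl
  have hmem : ∀ m n, m < n → aa n ∈ (step (F m)).2.2 := by
    intro m n hmn
    have h1 : aa n ∈ (F n).1 := ha (F n)
    exact (hFsucc m ▸ hmono (m + 1) n hmn) h1
  have hne : ∀ m n, m < n → aa n ≠ aa m := by
    intro m n hmn h
    have := hmem m n hmn
    rw [h] at this
    exact hnotmem (F m) this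
  have hainj : Function.Injective aa := by
    intro m n h
    rcases lt_trichotomy m n with hlt | he | hlt
    · exact absurd h.symm (hne m n hlt)
    · exact he
    · exact absurd h (hne n m hlt)
  have hcolor : ∀ m n, m < n → c (aa m) (aa n) = kk m := fun m n hmn =>
    hcol (F m) _ (hmem m n hmn)
  obtain ⟨k0, hk0⟩ := Finite.exists_infinite_fiber kk
  haveI := hk0
  have hI : (kk ⁻¹' {k0}).Infinite := Set.infinite_coe_iff.mp hk0
  refine ⟨aa '' (kk ⁻¹' {k0}), (Set.countable_range aa).mono (Set.image_subset_range aa _),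
    hI.image hainj.injOn, k0, ?_⟩
  rintro _ ⟨m, hm, rfl⟩ _ ⟨n, hn, rfl⟩ hxy
  have hmn : m ≠ n := fun h => hxy (by rw [h])
  rcases hmn.lt_or_gt with h | h
  · rw [hcolor m n h]; exact hm
  · rw [hsymm, hcolor n m h]; exact hn

/-- Every infinite metric space with finite scale `d(X,X)` contains a countably
infinite equidistance subset. -/
theorem stmt0 {X : Type*} [MetricSpace X] [Infinite X]
    (hscale : (Set.range fun p : X × X => dist p.1 p.2).Finite) :
    ∃ Y : Set X, Y.Countable ∧ Y.Infinite ∧ EquidistanceSubset Y := by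
  classical
  haveI : Finite ↥(Set.range fun p : X × X => dist p.1 p.2) := hscale.to_subtype
  set C := ↥(Set.range fun p : X × X => dist p.1 p.2) with hC
  let c : X → X → C := fun x y => ⟨dist x y, ⟨(x, y), rfl⟩⟩
  have hsymm : ∀ x y, c x y = c y x := fun x y => Subtype.ext (dist_comm x y)
  obtain ⟨Y, hYc, hYinf, k, hk⟩ := ramsey_pairs c hsymm
  refine ⟨Y, hYc, hYinf, (k : ℝ), ?_, fun x hx y hy hxy => ?_⟩
  · obtain ⟨x, hx, y, hy, hxy⟩ := hYinf.nontrivial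
    have : dist x y = (k : ℝ) := congrArg Subtype.val (hk x hx y hy hxy)
    rw [← this]
    exact dist_pos.mpr hxy
  · exact congrArg Subtype.val (hk x hx y hy hxy)
end

section
/- Let (X,d) be an infinite ultrametric space whose scale d(X,X) is finite. If the cardinal |X| is regular, then X contains an equidistance subset Y with |Y| = |X|. -/
lemma aux_stmt1 {X : Type*} [MetricSpace X]
    (hultra : ∀ x y z : X, dist x z ≤ max (dist x y) (dist y z))
    (κ : Cardinal) (hreg : κ.IsRegular) :
    ∀ n : ℕ, ∀ A : Set X, (Set.image2 dist A A).Finite →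
      (Set.image2 dist A A).ncard ≤ n → Cardinal.mk A = κ →
      ∃ Y : Set X, Y ⊆ A ∧ EquidistanceSubset Y ∧ Cardinal.mk Y = κ := by
  intro n
  induction n with
  | zero =>
    intro A hfin hcard hA
    exfalso
    have hAinf : A.Infinite := by
      rw [← Set.infinite_coe_iff]
      exact Cardinal.infinite_iff.mpr (hA ▸ hreg.aleph0_le)
    obtain ⟨a, ha, b, hb, -⟩ := hAinf.nontrivial
    have : (Set.image2 dist A A).Nonempty := ⟨dist a b, Set.mem_image2_of_mem ha hb⟩
    have := (Set.ncard_pos hfin).mpr this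
    omega
  | succ n ih =>
    intro A hfin hcard hA
    have hAinf : A.Infinite := by
      rw [← Set.infinite_coe_iff]
      exact Cardinal.infinite_iff.mpr (hA ▸ hreg.aleph0_le)
    set D : Set ℝ := Set.image2 dist A A ∩ {s | 0 < s} with hDdef
    have hDfin : D.Finite := hfin.inter_of_left _
    have hDne : D.Nonempty := by
      obtain ⟨a, ha, b, hb, hab⟩ := hAinf.nontrivial
      exact ⟨dist a b, Set.mem_image2_of_mem ha hb, dist_pos.mpr hab⟩
    have hDne' : hDfin.toFinset.Nonempty := by rwa [Set.Finite.toFinset_nonempty]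
    set r : ℝ := hDfin.toFinset.max' hDne' with hrdef
    have hrD : r ∈ D := hDfin.mem_toFinset.mp (hDfin.toFinset.max'_mem hDne')
    have hrmax : ∀ s ∈ D, s ≤ r := fun s hs =>
      hDfin.toFinset.le_max' s (hDfin.mem_toFinset.mpr hs)
    have hrpos : 0 < r := hrD.2
    have hle : ∀ x ∈ A, ∀ y ∈ A, dist x y ≤ r := by
      intro x hx y hy
      rcases eq_or_ne x y with rfl | hne
      · simpa using hrpos.le
      · exact hrmax _ ⟨Set.mem_image2_of_mem hx hy, dist_pos.mpr hne⟩
    set f : X → Set X := fun x => {y ∈ A | dist x y < r} with hfdef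
    have hfsub : ∀ x, f x ⊆ A := fun x y hy => hy.1
    have hfself : ∀ x ∈ A, x ∈ f x := fun x hx => ⟨hx, by simpa using hrpos⟩
    have key : ∀ x ∈ A, ∀ y ∈ A, (f x = f y ↔ dist x y < r) := by
      intro x hx y hy
      constructor
      · intro h
        have : y ∈ f x := h ▸ hfself y hy
        exact this.2
      · intro h
        ext z
        simp only [hfdef, Set.mem_setOf_eq]
        constructor
        · rintro ⟨hzA, hz⟩
          refine ⟨hzA, lt_of_le_of_lt (hultra y x z) (max_lt ?_ hz)⟩
          rwa [dist_comm]
        · rintro ⟨hzA, hz⟩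
          exact ⟨hzA, lt_of_le_of_lt (hultra x y z) (max_lt h hz)⟩
    by_cases hbig : ∃ x ∈ A, Cardinal.mk (f x) = κ
    · -- recurse into a big class
      obtain ⟨x, hxA, hBx⟩ := hbig
      have hdistB : ∀ y ∈ f x, ∀ z ∈ f x, dist y z < r := by
        intro y hy z hz
        refine lt_of_le_of_lt (hultra y x z) (max_lt ?_ hz.2)
        rw [dist_comm]; exact hy.2
      have hss : Set.image2 dist (f x) (f x) ⊂ Set.image2 dist A A := by
        constructor
        · exact Set.image2_subset (hfsub x) (hfsub x)
        · intro h
          obtain ⟨y, hy, z, hz, hyz⟩ := h hrD.1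
          exact absurd hyz (ne_of_lt (hdistB y hy z hz))
      have hlt : (Set.image2 dist (f x) (f x)).ncard < (Set.image2 dist A A).ncard :=
        Set.ncard_lt_ncard hss hfin
      obtain ⟨Y, hYB, hEq, hYκ⟩ := ih (f x) (hfin.subset hss.subset) (by omega) hBx
      exact ⟨Y, hYB.trans (hfsub x), hEq, hYκ⟩
    · push_neg at hbig
      set T : Set (Set X) := f '' A with hTdef
      have hTle : Cardinal.mk T ≤ κ := hA ▸ Cardinal.mk_image_le
      have hTeq : Cardinal.mk T = κ := by
        by_contra hne
        have hTlt : Cardinal.mk T < κ := lt_of_le_of_ne hTle hne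
        have hcover : A ⊆ ⋃ t : T, (t : Set X) := fun y hy =>
          Set.mem_iUnion.mpr ⟨⟨f y, Set.mem_image_of_mem f hy⟩, hfself y hy⟩
        have h1 : κ ≤ Cardinal.sum fun t : T => Cardinal.mk (t : Set X) := by
          calc κ = Cardinal.mk A := hA.symm
            _ ≤ Cardinal.mk (⋃ t : T, (t : Set X)) := Cardinal.mk_le_mk_of_subset hcover
            _ ≤ _ := Cardinal.mk_iUnion_le_sum_mk
        have h2 : (Cardinal.sum fun t : T => Cardinal.mk (t : Set X)) < κ := by
          refine Cardinal.sum_lt_of_isRegular hreg hTlt ?_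
          rintro ⟨t, ht⟩
          obtain ⟨y, hyA, rfl⟩ := ht
          exact lt_of_le_of_ne (hA ▸ Cardinal.mk_le_mk_of_subset (hfsub y)) (hbig y hyA)
        exact absurd (h1.trans_lt h2) (lt_irrefl κ)
      have hrep : ∀ t : T, ∃ y, y ∈ A ∧ f y = t.1 := fun t => t.2
      choose g hgA hgf using hrep
      refine ⟨Set.range g, ?_, ⟨r, hrpos, ?_⟩, ?_⟩
      · rintro y ⟨t, rfl⟩; exact hgA t
      · rintro y ⟨t₁, rfl⟩ z ⟨t₂, rfl⟩ hne
        have ht : t₁ ≠ t₂ := fun h => hne (by rw [h])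
        have hfne : f (g t₁) ≠ f (g t₂) := by
          rw [hgf t₁, hgf t₂]
          exact fun h => ht (Subtype.ext h)
        have : ¬ dist (g t₁) (g t₂) < r := fun h =>
          hfne ((key _ (hgA t₁) _ (hgA t₂)).mpr h)
        exact le_antisymm (hle _ (hgA t₁) _ (hgA t₂)) (not_lt.mp this)
      · have ginj : Function.Injective g := by
          intro t₁ t₂ h
          apply Subtype.ext
          rw [← hgf t₁, ← hgf t₂, h]
        rw [Cardinal.mk_range_eq g ginj]
        exact hTeq

/-- An infinite ultrametric space with finite scale whose cardinality is a regular
cardinal contains an equidistance subset of full cardinality. -/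
theorem stmt1 {X : Type*} [MetricSpace X] [Infinite X]
    (hultra : ∀ x y z : X, dist x z ≤ max (dist x y) (dist y z))
    (hscale : (Set.range fun p : X × X => dist p.1 p.2).Finite)
    (hreg : (Cardinal.mk X).IsRegular) :
    ∃ Y : Set X, EquidistanceSubset Y ∧ Cardinal.mk Y = Cardinal.mk X := by
  have himg : (Set.image2 dist (Set.univ : Set X) Set.univ).Finite := by
    convert hscale using 1
    ext s
    simp [Set.mem_image2, Set.mem_range, Prod.exists]
  obtain ⟨Y, _, hEq, hY⟩ := aux_stmt1 hultra (Cardinal.mk X) hreg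
    (Set.image2 dist (Set.univ : Set X) Set.univ).ncard Set.univ himg le_rfl
    (by simp)
  exact ⟨Y, hEq, hY⟩
end

section
/- Let (X,d) be an infinite ultrametric space whose scale d(X,X) is finite. If the cardinal |X| is singular, then for every cardinal κ < |X| there exists an equidistance subset of X of cardinality κ. -/
universe u

open Cardinal in
private lemma aux_key {X : Type u} [MetricSpace X]
    (hultra : ∀ x y z : X, dist x z ≤ max (dist x y) (dist y z)) :
    ∀ n : ℕ, ∀ A : Set X,
      ∀ hfin : {s : ℝ | 0 < s ∧ ∃ x ∈ A, ∃ y ∈ A, dist x y = s}.Finite,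
      hfin.toFinset.card ≤ n →
      ∀ κ : Cardinal.{u}, ℵ₀ ≤ κ → κ ≤ Cardinal.mk A →
      (κ = ℵ₀ ∨ κ < Cardinal.mk A) →
      ∃ Y : Set X, Y ⊆ A ∧ EquidistanceSubset Y ∧ κ ≤ Cardinal.mk Y := by
  intro n
  induction n with
  | zero =>
    intro A hfin hcard κ hκinf hκle _
    exfalso
    -- A is nontrivial since ℵ₀ ≤ #A, giving a positive distance, contradiction
    have hempty : {s : ℝ | 0 < s ∧ ∃ x ∈ A, ∃ y ∈ A, dist x y = s} = ∅ := by
      rw [← Set.Finite.toFinset_eq_empty (h := hfin)]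
      exact Finset.card_eq_zero.mp (Nat.le_zero.mp hcard)
    have h1 : (1 : Cardinal.{u}) < Cardinal.mk A :=
      lt_of_lt_of_le (lt_of_lt_of_le one_lt_aleph0 hκinf) hκle
    obtain ⟨x, y, hxy⟩ := Cardinal.one_lt_iff_nontrivial.mp h1
    have hd : 0 < dist (x : X) (y : X) := dist_pos.mpr (fun h => hxy (Subtype.ext h))
    have : dist (x : X) (y : X) ∈ ({} : Set ℝ) := by
      rw [← hempty]; exact ⟨hd, x, x.2, y, y.2, rfl⟩
    exact this
  | succ n ih =>
    intro A hfin hcard κ hκinf hκle hκor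
    by_cases hset : {s : ℝ | 0 < s ∧ ∃ x ∈ A, ∃ y ∈ A, dist x y = s} = ∅
    · exfalso
      have h1 : (1 : Cardinal.{u}) < Cardinal.mk A :=
        lt_of_lt_of_le (lt_of_lt_of_le one_lt_aleph0 hκinf) hκle
      obtain ⟨x, y, hxy⟩ := Cardinal.one_lt_iff_nontrivial.mp h1
      have hd : 0 < dist (x : X) (y : X) := dist_pos.mpr (fun h => hxy (Subtype.ext h))
      have : dist (x : X) (y : X) ∈ ({} : Set ℝ) := by
        rw [← hset]; exact ⟨hd, x, x.2, y, y.2, rfl⟩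
      exact this
    · have hne : hfin.toFinset.Nonempty := by
        rw [Set.Finite.toFinset_nonempty]; exact Set.nonempty_iff_ne_empty.mpr hset
      set r : ℝ := hfin.toFinset.max' hne with hr_def
      have hr_mem : r ∈ {s : ℝ | 0 < s ∧ ∃ x ∈ A, ∃ y ∈ A, dist x y = s} := by
        have := hfin.toFinset.max'_mem hne
        rwa [Set.Finite.mem_toFinset] at this
      have hr_pos : 0 < r := hr_mem.1
      -- all distances in A are ≤ r
      have hr_max : ∀ x ∈ A, ∀ y ∈ A, dist x y ≤ r := by
        intro x hx y hy
        rcases eq_or_lt_of_le (dist_nonneg (x := x) (y := y)) with h0 | h0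
        · rw [← h0]; exact le_of_lt hr_pos
        · exact hfin.toFinset.le_max' _ (by rw [Set.Finite.mem_toFinset]; exact ⟨h0, x, hx, y, hy, rfl⟩)
      -- open balls of radius r
      set B : X → Set X := fun a => {x | x ∈ A ∧ dist a x < r} with hB_def
      have hBsub : ∀ a, B a ⊆ A := fun a x hx => hx.1
      have hBself : ∀ a ∈ A, a ∈ B a := fun a ha => ⟨ha, by simpa using hr_pos⟩
      -- ball equality
      have hBeq : ∀ a ∈ A, ∀ b ∈ A, dist a b < r → B a = B b := by
        intro a _ b _ hab
        ext x
        simp only [hB_def, Set.mem_setOf_eq]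
        constructor
        · rintro ⟨hxA, hax⟩
          exact ⟨hxA, lt_of_le_of_lt (hultra b a x) (by rw [dist_comm b a]; exact max_lt hab hax)⟩
        · rintro ⟨hxA, hbx⟩
          exact ⟨hxA, lt_of_le_of_lt (hultra a b x) (max_lt hab hbx)⟩
      -- if points lie in the same ball, their distance is < r
      have hB_small : ∀ a, ∀ x ∈ B a, ∀ y ∈ B a, dist x y < r := by
        intro a x hx y hy
        exact lt_of_le_of_lt (hultra x a y) (max_lt (by rw [dist_comm]; exact hx.2) hy.2)
      set Λ : Set (Set X) := B '' A with hΛ_def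
      by_cases hcase : κ ≤ Cardinal.mk Λ
      · -- pick one point per ball
        have hchoice : ∀ β : Λ, ∃ a, a ∈ A ∧ B a = (β : Set X) := by
          rintro ⟨β, hβ⟩; exact hβ
        choose f hfA hfB using hchoice
        have hfinj : Function.Injective f := by
          intro β₁ β₂ h
          have h1 := hfB β₁
          have h2 := hfB β₂
          rw [h] at h1
          exact Subtype.ext (h1 ▸ h2.symm ▸ rfl)
        refine ⟨Set.range f, ?_, ⟨r, hr_pos, ?_⟩, ?_⟩
        · rintro x ⟨β, rfl⟩; exact hfA β
        · rintro x ⟨β₁, rfl⟩ y ⟨β₂, rfl⟩ hxy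
          have hβne : β₁ ≠ β₂ := fun h => hxy (by rw [h])
          have hle := hr_max _ (hfA β₁) _ (hfA β₂)
          rcases lt_or_eq_of_le hle with hlt | heq
          · exfalso
            have : B (f β₁) = B (f β₂) := hBeq _ (hfA β₁) _ (hfA β₂) hlt
            rw [hfB β₁, hfB β₂] at this
            exact hβne (Subtype.ext this)
          · exact heq
        · rw [Cardinal.mk_range_eq f hfinj]; exact hcase
      · -- few balls: some ball is big, recurse into it
        push_neg at hcase
        have hbig : ∃ β ∈ Λ, κ ≤ Cardinal.mk β ∧ (κ = ℵ₀ ∨ κ < Cardinal.mk β) := by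
          have hAsub : A ⊆ ⋃ β : Λ, (β : Set X) := by
            intro a ha
            exact Set.mem_iUnion.mpr ⟨⟨B a, ⟨a, ha, rfl⟩⟩, hBself a ha⟩
          rcases hκor with hℵ | hlt
          · -- κ = ℵ₀ : some ball is infinite
            by_contra hcon
            push_neg at hcon
            have hΛfin : Λ.Finite := Cardinal.lt_aleph0_iff_set_finite.mp (hℵ ▸ hcase)
            have hballfin : ∀ β ∈ Λ, (β : Set X).Finite := by
              intro β hβ
              by_contra hβinf
              have h0 : ℵ₀ ≤ Cardinal.mk β := by
                rw [← not_lt, Cardinal.lt_aleph0_iff_set_finite]; exact hβinf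
              exact (hcon β hβ (hℵ ▸ h0)).1 hℵ
            have hAfin : A.Finite := by
              refine Set.Finite.subset (Set.Finite.sUnion hΛfin hballfin) ?_
              intro a ha
              exact ⟨B a, ⟨a, ha, rfl⟩, hBself a ha⟩
            have : Cardinal.mk A < ℵ₀ := Cardinal.lt_aleph0_iff_set_finite.mpr hAfin
            exact absurd (lt_of_lt_of_le this (hℵ ▸ hκle)) (lt_irrefl _)
          · -- κ < #A : some ball has cardinality > κ
            by_contra hcon
            push_neg at hcon
            have hballs : ∀ β : Λ, Cardinal.mk (β : Set X) ≤ κ := by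
              intro β
              rcases le_or_gt κ (Cardinal.mk (β : Set X)) with h | h
              · exact (hcon β β.2 h).2
              · exact le_of_lt h
            have h1 : Cardinal.mk A ≤ Cardinal.mk (⋃ β : Λ, (β : Set X)) :=
              Cardinal.mk_le_mk_of_subset hAsub
            have h2 : Cardinal.mk (⋃ β : Λ, (β : Set X)) ≤ Cardinal.mk Λ * ⨆ β : Λ, Cardinal.mk (β : Set X) :=
              Cardinal.mk_iUnion_le _
            have h3 : Cardinal.mk Λ * (⨆ β : Λ, Cardinal.mk (β : Set X)) ≤ κ * κ :=
              mul_le_mul' (le_of_lt hcase) (ciSup_le' hballs)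
            rw [Cardinal.mul_eq_self hκinf] at h3
            exact absurd (lt_of_le_of_lt (le_trans h1 (le_trans h2 h3)) hlt) (lt_irrefl _)
        obtain ⟨β, hβΛ, hβκ, hβor⟩ := hbig
        obtain ⟨a, haA, haB⟩ := hβΛ
        -- the scale of β omits r
        have hβfin : {s : ℝ | 0 < s ∧ ∃ x ∈ β, ∃ y ∈ β, dist x y = s}.Finite := by
          refine Set.Finite.subset hfin ?_
          rintro s ⟨hs, x, hx, y, hy, rfl⟩
          exact ⟨hs, x, (haB ▸ hBsub a) hx, y, (haB ▸ hBsub a) hy, rfl⟩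
        have hβcard : hβfin.toFinset.card ≤ n := by
          have hsub : hβfin.toFinset ⊆ hfin.toFinset.erase r := by
            intro s hs
            rw [Set.Finite.mem_toFinset] at hs
            obtain ⟨hspos, x, hx, y, hy, hdist⟩ := hs
            refine Finset.mem_erase.mpr ⟨?_, ?_⟩
            · rw [← hdist]
              exact ne_of_lt (hB_small a x (haB ▸ hx) y (haB ▸ hy))
            · rw [Set.Finite.mem_toFinset]
              exact ⟨hspos, x, (haB ▸ hBsub a) hx, y, (haB ▸ hBsub a) hy, hdist⟩
          calc hβfin.toFinset.card ≤ (hfin.toFinset.erase r).card := Finset.card_le_card hsub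
            _ = hfin.toFinset.card - 1 := Finset.card_erase_of_mem (by
                rw [Set.Finite.mem_toFinset]; exact hr_mem)
            _ ≤ n := by omega
        obtain ⟨Y, hYβ, hYeq, hYκ⟩ := ih β hβfin hβcard κ hκinf hβκ hβor
        exact ⟨Y, fun x hx => (haB ▸ hBsub a) (hYβ hx), hYeq, hYκ⟩

/-- In an infinite ultrametric space with finite scale whose cardinality is a
singular cardinal, for every cardinal `κ < |X|` there is an equidistance subset
of cardinality `κ`. -/
theorem stmt2 {X : Type u} [MetricSpace X] [Infinite X]
    (hultra : ∀ x y z : X, dist x z ≤ max (dist x y) (dist y z))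
    (hscale : (Set.range fun p : X × X => dist p.1 p.2).Finite)
    (hsing : ¬ (Cardinal.mk X).IsRegular) :
    ∀ κ : Cardinal.{u}, κ < Cardinal.mk X →
      ∃ Y : Set X, EquidistanceSubset Y ∧ Cardinal.mk Y = κ := by
  intro κ hκ
  have hfin : {s : ℝ | 0 < s ∧ ∃ x ∈ (Set.univ : Set X), ∃ y ∈ (Set.univ : Set X),
      dist x y = s}.Finite := by
    refine Set.Finite.subset hscale ?_
    rintro s ⟨_, x, _, y, _, rfl⟩
    exact ⟨(x, y), rfl⟩
  set κ' : Cardinal.{u} := max κ Cardinal.aleph0 with hκ'_def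
  have hκ'inf : Cardinal.aleph0 ≤ κ' := le_max_right _ _
  have hXinf : Cardinal.aleph0 ≤ Cardinal.mk X := Cardinal.aleph0_le_mk X
  have hκ'le : κ' ≤ Cardinal.mk (Set.univ : Set X) := by
    rw [Cardinal.mk_univ]
    exact max_le (le_of_lt hκ) hXinf
  have hκ'or : κ' = Cardinal.aleph0 ∨ κ' < Cardinal.mk (Set.univ : Set X) := by
    rw [Cardinal.mk_univ]
    rcases le_or_gt Cardinal.aleph0 κ with h | h
    · right; rw [hκ'_def, max_eq_left h]; exact hκ
    · left; rw [hκ'_def, max_eq_right (le_of_lt h)]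
  obtain ⟨Y, _, ⟨r, hr_pos, hr_eq⟩, hYκ⟩ :=
    aux_key hultra (hfin.toFinset.card) (Set.univ : Set X) hfin le_rfl κ' hκ'inf hκ'le hκ'or
  have hκY : κ ≤ Cardinal.mk Y := le_trans (le_max_left _ _) hYκ
  obtain ⟨Z, hZY, hZκ⟩ := Cardinal.le_mk_iff_exists_subset.mp hκY
  exact ⟨Z, ⟨r, hr_pos, fun x hx y hy hxy => hr_eq x (hZY hx) y (hZY hy) hxy⟩, hZκ⟩
end

section
/- For every singular infinite cardinal κ there exists an ultrametric space (X,d) with |X| = κ and scale d(X,X) = {0,1,2} such that every equidistance subset Y of X has cardinality |Y| < κ. -/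
universe u

/-- For every singular infinite cardinal `κ` there is an ultrametric space `(X,d)`
with `|X| = κ` and scale `{0,1,2}` in which every equidistance subset has
cardinality `< κ`. -/
theorem stmt3 (κ : Cardinal.{u}) (hκ : Cardinal.aleph0 ≤ κ)
    (hsing : ¬ κ.IsRegular) :
    ∃ (X : Type u) (d : X → X → ℝ),
      (∀ x y : X, d x y = 0 ↔ x = y) ∧
      (∀ x y : X, d x y = d y x) ∧
      (∀ x y z : X, d x z ≤ max (d x y) (d y z)) ∧
      Cardinal.mk X = κ ∧
      (Set.range fun p : X × X => d p.1 p.2) = {0, 1, 2} ∧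
      ∀ Y : Set X,
        (∃ r : ℝ, 0 < r ∧ ∀ x ∈ Y, ∀ y ∈ Y, x ≠ y → d x y = r) →
        Cardinal.mk Y < κ := by
  classical
  -- cofinality is < κ
  have hcof : κ.ord.cof < κ := by
    rcases lt_or_ge κ.ord.cof κ with h | h
    · exact h
    · exact absurd ⟨hκ, h⟩ hsing
  obtain ⟨ι, f, hlsub, hι⟩ := Ordinal.exists_lsub_cof κ.ord
  set X : Type u := κ.ord.ToType with hX
  have hmkX : Cardinal.mk X = κ := by
    rw [hX, Cardinal.mk_toType, Cardinal.card_ord]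
  -- ordinal value of each point
  let t : X → Ordinal := fun x => ((Ordinal.ToType.mk (o := κ.ord)).symm x : Set.Iio κ.ord)
  have ht_inj : Function.Injective t := by
    intro x y h
    have := Subtype.ext (p := fun o => o ∈ Set.Iio κ.ord) h
    exact (Ordinal.ToType.mk (o := κ.ord)).symm.injective this
  have ht_lt : ∀ x, t x < κ.ord := fun x => ((Ordinal.ToType.mk (o := κ.ord)).symm x).2
  have hlim : Order.IsSuccLimit κ.ord := Cardinal.isSuccLimit_ord hκ
  have hblk : ∀ x : X, ∃ i, t x ≤ f i := by
    intro x
    have : t x < Ordinal.lsub f := hlsub ▸ ht_lt x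
    exact Ordinal.lt_lsub_iff.1 this
  let blk : X → ι := fun x => (hblk x).choose
  have hblk_lt : ∀ x, t x ≤ f (blk x) := fun x => (hblk x).choose_spec
  -- fibers of blk are small
  have hfiber : ∀ i : ι, Cardinal.mk {x : X // blk x = i} < κ := by
    intro i
    have hinj : Function.Injective
        (fun x : {x : X // blk x = i} =>
          Ordinal.ToType.mk (o := Order.succ (f i)) ⟨t x.1, by
            have := hblk_lt x.1; rw [x.2] at this
            exact Order.lt_succ_iff.2 this⟩) := by
      intro a b h
      have h2 := congrArg Subtype.val ((Ordinal.ToType.mk (o := Order.succ (f i))).injective h)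
      exact Subtype.ext (ht_inj h2)
    calc Cardinal.mk {x : X // blk x = i} ≤ Cardinal.mk (Order.succ (f i)).ToType :=
          Cardinal.mk_le_of_injective hinj
      _ = (Order.succ (f i)).card := Cardinal.mk_toType _
      _ < κ := by
          rw [← Cardinal.lt_ord]
          exact hlim.succ_lt (hlsub ▸ Ordinal.lt_lsub f i)
  -- the metric
  let d : X → X → ℝ := fun x y => if x = y then 0 else if blk x = blk y then 1 else 2
  have hd_eq : ∀ x y : X, d x y = 0 ↔ x = y := by
    intro x y
    constructor
    · intro h
      by_contra hxy
      simp only [d, if_neg hxy] at h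
      split at h <;> norm_num at h
    · intro h; simp [d, h]
  have hd_symm : ∀ x y : X, d x y = d y x := by
    intro x y
    by_cases h : x = y
    · simp [d, h]
    · simp only [d, if_neg h, if_neg (Ne.symm h)]
      by_cases hb : blk x = blk y
      · rw [if_pos hb, if_pos hb.symm]
      · rw [if_neg hb, if_neg (Ne.symm hb)]
  have hd_nonneg : ∀ x y : X, 0 ≤ d x y := by
    intro x y
    simp only [d]; split
    · norm_num
    · split <;> norm_num
  have hd_le_two : ∀ x y : X, d x y ≤ 2 := by
    intro x y; simp only [d]; split; · norm_num
    split <;> norm_num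
  have hd_ultra : ∀ x y z : X, d x z ≤ max (d x y) (d y z) := by
    intro x y z
    by_cases hxz : x = z
    · simp only [d, if_pos hxz]
      exact le_max_of_le_left (hd_nonneg x y)
    by_cases hbxz : blk x = blk z
    · -- d x z = 1
      have h1 : d x z = 1 := by simp [d, hxz, hbxz]
      rw [h1]
      by_cases hxy : x = y
      · subst hxy
        have : d x z = 1 := h1
        exact le_max_of_le_right (by rw [this])
      · have : (1:ℝ) ≤ d x y := by
          simp only [d, if_neg hxy]; split <;> norm_num
        exact le_max_of_le_left this
    · -- d x z = 2 : blocks differ, so y differs from x or z in block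
      have h2 : d x z = 2 := by simp [d, hxz, hbxz]
      rw [h2]
      by_cases hbxy : blk x = blk y
      · have hbyz : blk y ≠ blk z := fun h => hbxz (hbxy.trans h)
        have hyz : y ≠ z := fun h => hbyz (by rw [h])
        have : d y z = 2 := by simp [d, hyz, hbyz]
        exact le_max_of_le_right this.ge
      · have hxy : x ≠ y := fun h => hbxy (by rw [h])
        have : d x y = 2 := by simp [d, hxy, hbxy]
        exact le_max_of_le_left this.ge
  -- X is nonempty and blk is neither injective nor constant
  have hκpos : (0:Cardinal) < κ := lt_of_lt_of_le Cardinal.aleph0_pos hκ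
  have hXne : Nonempty X := by
    rw [← Cardinal.mk_ne_zero_iff, hmkX]; exact hκpos.ne'
  obtain ⟨x₀⟩ := hXne
  have hblk_not_inj : ¬ Function.Injective blk := by
    intro h
    have : Cardinal.mk X ≤ Cardinal.mk ι := Cardinal.mk_le_of_injective h
    rw [hmkX, hι] at this
    exact absurd this (not_le.2 hcof)
  have hblk_not_const : ∃ x y : X, blk x ≠ blk y := by
    by_contra h
    push_neg at h
    have hinj : Function.Injective (fun x : X => (⟨x, h x x₀⟩ : {x : X // blk x = blk x₀})) :=
      fun a b hab => congrArg Subtype.val hab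
    have : Cardinal.mk X ≤ Cardinal.mk {x : X // blk x = blk x₀} :=
      Cardinal.mk_le_of_injective hinj
    rw [hmkX] at this
    exact absurd (lt_of_le_of_lt this (hfiber (blk x₀))) (lt_irrefl κ)
  refine ⟨X, d, hd_eq, hd_symm, hd_ultra, hmkX, ?_, ?_⟩
  · -- range = {0,1,2}
    apply Set.eq_of_subset_of_subset
    · rintro r ⟨⟨x, y⟩, rfl⟩
      simp only [d]
      split
      · exact Set.mem_insert _ _
      split
      · exact Set.mem_insert_of_mem _ (Set.mem_insert _ _)
      · exact Set.mem_insert_of_mem _ (Set.mem_insert_of_mem _ rfl)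
    · intro r hr
      rcases hr with rfl | rfl | rfl
      · exact ⟨(x₀, x₀), by simp [d]⟩
      · obtain ⟨a, b, hab, hne⟩ := Function.not_injective_iff.1 hblk_not_inj
        exact ⟨(a, b), by simp [d, hne, hab]⟩
      · obtain ⟨a, b, hab⟩ := hblk_not_const
        have hne : a ≠ b := fun h => hab (by rw [h])
        exact ⟨(a, b), by simp [d, hne, hab]⟩
  · -- equidistance subsets are small
    intro Y ⟨r, hr, hY⟩
    by_cases hsub : ∀ x ∈ Y, ∀ y ∈ Y, x = y
    · -- Y is subsingleton
      have : Cardinal.mk Y ≤ 1 := by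
        rw [Cardinal.mk_le_one_iff_set_subsingleton]
        intro a ha b hb
        exact hsub a ha b hb
      exact lt_of_le_of_lt this (lt_of_lt_of_le Cardinal.one_lt_aleph0 hκ)
    · push_neg at hsub
      obtain ⟨x, hx, y, hy, hxy⟩ := hsub
      have hrval : d x y = r := hY x hx y hy hxy
      by_cases hbxy : blk x = blk y
      · -- r = 1: Y inside one fiber
        have hr1 : r = 1 := by rw [← hrval]; simp [d, hxy, hbxy]
        have hYfib : ∀ a ∈ Y, blk a = blk x := by
          intro a ha
          by_cases hax : a = x
          · rw [hax]
          · have := hY a ha x hx hax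
            rw [hr1] at this
            by_contra hb
            simp [d, hax, hb] at this
        have hinj : Function.Injective
            (fun a : Y => (⟨a.1, hYfib a.1 a.2⟩ : {z : X // blk z = blk x})) := by
          intro a b hab
          simp only [Subtype.mk.injEq] at hab
          exact Subtype.ext hab
        exact lt_of_le_of_lt (Cardinal.mk_le_of_injective hinj) (hfiber (blk x))
      · -- r = 2: blk injective on Y
        have hr2 : r = 2 := by rw [← hrval]; simp [d, hxy, hbxy]
        have hinj : Function.Injective (fun a : Y => blk a.1) := by
          intro a b hab
          by_contra hne
          have hne' : a.1 ≠ b.1 := fun h => hne (Subtype.ext h)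
          have := hY a.1 a.2 b.1 b.2 hne'
          rw [hr2] at this
          simp [d, hne', hab] at this
        calc Cardinal.mk Y ≤ Cardinal.mk ι := Cardinal.mk_le_of_injective hinj
          _ = κ.ord.cof := hι
          _ < κ := hcof
end

section
/- For every infinite cardinal κ there exists a metric space (X,d) with |X| = 2^κ and scale d(X,X) = {0,1,2} such that every equidistance subset Y of (X,d) has cardinality |Y| ≤ κ. -/
universe u

open Cardinal Set


theorem chain_bound : ∀ (o : Ordinal.{u}) (ι : Type u) [LinearOrder ι] [WellFoundedLT ι],
    Ordinal.type ((· < ·) : ι → ι → Prop) = o →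
    ∀ A : Set (Lex (ι → Bool)), A.WellFoundedOn (· < ·) → #A ≤ ℵ₀ ⊔ #ι := by
  intro o
  induction o using Ordinal.induction with
  | h o IH =>
  intro ι _ _ hty A hA
  classical
  set μ : Cardinal.{u} := ℵ₀ ⊔ #ι with hμ
  have hμ0 : ℵ₀ ≤ μ := le_sup_left
  rcases isEmpty_or_nonempty ι with hemp | hne
  · have hsub : A.Subsingleton := by
      intro f _ f' _
      exact funext fun i => hemp.elim i
    exact le_trans (Cardinal.mk_le_one_iff_set_subsingleton.2 hsub)
      (le_trans Cardinal.one_le_aleph0 hμ0)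
  -- non-maximal elements
  set B : Set (Lex (ι → Bool)) := {f | f ∈ A ∧ ∃ g ∈ A, f < g} with hB
  have hABsub : (A \ B).Subsingleton := by
    intro f hf g hg
    by_contra hne'
    rcases lt_or_gt_of_ne hne' with h | h
    · exact hf.2 ⟨hf.1, g, hg.1, h⟩
    · exact hg.2 ⟨hg.1, f, hf.1, h⟩
  have hwfA : WellFounded (fun a b : A => (a : Lex (ι → Bool)) < b) := hA
  -- successor data
  have hstep : ∀ f : Lex (ι → Bool), ∃ (i : ι) (g : Lex (ι → Bool)), f ∈ B → (g ∈ A ∧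
      (∀ j, j < i → ofLex f j = ofLex g j) ∧ ofLex f i = false ∧ ofLex g i = true ∧
      ∀ g' ∈ A, f < g' → g ≤ g') := by
    intro f
    by_cases hf : f ∈ B; swap
    · exact ⟨Classical.arbitrary ι, f, fun h => absurd h hf⟩
    obtain ⟨hfA, g0, hg0A, hfg0⟩ := hf
    set T : Set A := {g | f < (g : Lex (ι → Bool))} with hT
    have hTne : T.Nonempty := ⟨⟨g0, hg0A⟩, hfg0⟩
    set m : A := hwfA.min T hTne with hm
    have hmT : f < (m : Lex (ι → Bool)) := hwfA.min_mem T hTne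
    have hmin : ∀ g' ∈ A, f < g' → (m : Lex (ι → Bool)) ≤ g' := by
      intro g' hg' h'
      refine le_of_not_gt fun hlt => ?_
      exact hwfA.not_lt_min T (show (⟨g', hg'⟩ : A) ∈ T from h') hlt
    obtain ⟨i, hagree, hi⟩ := hmT
    rw [Bool.lt_iff] at hi
    exact ⟨i, m, fun _ => ⟨m.2, hagree, hi.1, hi.2, hmin⟩⟩
  choose δ g hprop using hstep
  have hgA : ∀ f ∈ B, g f ∈ A := fun f hf => (hprop f hf).1
  have hag : ∀ f ∈ B, ∀ j, j < δ f → ofLex f j = ofLex (g f) j := fun f hf => (hprop f hf).2.1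
  have hf0 : ∀ f ∈ B, ofLex f (δ f) = false := fun f hf => (hprop f hf).2.2.1
  have hg1 : ∀ f ∈ B, ofLex (g f) (δ f) = true := fun f hf => (hprop f hf).2.2.2.1
  have hgmin : ∀ f ∈ B, ∀ g' ∈ A, f < g' → g f ≤ g' := fun f hf => (hprop f hf).2.2.2.2
  -- injectivity on fibers
  have keylt : ∀ f ∈ B, ∀ f' ∈ B, δ f = δ f' →
      (∀ j, j < δ f → ofLex f j = ofLex f' j) → ¬ f < f' := by
    intro f hf f' hf' hδ hpre hlt
    have h1 : g f ≤ f' := hgmin f hf f' hf'.1 hlt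
    have h2 : f' < g f := by
      refine ⟨δ f, fun j hj => ((hpre j hj).symm.trans (hag f hf j hj)), ?_⟩
      show ofLex f' (δ f) < ofLex (g f) (δ f)
      rw [Bool.lt_iff]
      refine ⟨?_, hg1 f hf⟩
      have := hf0 f' hf'; rw [← hδ] at this; exact this
    exact absurd h1 (not_le_of_gt h2)
  have key : ∀ f ∈ B, ∀ f' ∈ B, δ f = δ f' →
      (∀ j, j < δ f → ofLex f j = ofLex f' j) → f = f' := by
    intro f hf f' hf' hδ hpre
    rcases lt_trichotomy f f' with h | h | h
    · exact absurd h (keylt f hf f' hf' hδ hpre)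
    · exact h
    · exact absurd h (keylt f' hf' f hf hδ.symm
        (fun j hj => (hpre j (hδ ▸ hj)).symm))
  -- fiber bound
  have fiber_bound : ∀ δ₀ : ι, #({f | f ∈ B ∧ δ f = δ₀} : Set (Lex (ι → Bool))) ≤ μ := by
    intro δ₀
    set res : Lex (ι → Bool) → Lex ({j : ι // j < δ₀} → Bool) :=
      fun f => toLex fun j => ofLex f j.val with hres
    set Bf : Set (Lex (ι → Bool)) := {f | f ∈ B ∧ δ f = δ₀} with hBf
    have mono : ∀ f ∈ Bf, ∀ f' ∈ Bf, f < f' → res f < res f' := by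
      rintro f ⟨hf, hfδ⟩ f' ⟨hf', hfδ'⟩ hlt
      obtain ⟨γ, hagr, hγ⟩ := hlt
      have hγδ : γ < δ₀ := by
        by_contra hge
        have heq : f = f' := key f hf f' hf' (hfδ.trans hfδ'.symm)
          (fun j hj => hagr j (lt_of_lt_of_le (hfδ ▸ hj) (not_lt.1 hge)))
        rw [heq] at hγ
        exact lt_irrefl _ hγ
      exact ⟨⟨γ, hγδ⟩, fun j hj => hagr j.val (Subtype.coe_lt_coe.2 hj), hγ⟩
    have hinjOn : InjOn res Bf := by
      rintro f ⟨hf, hfδ⟩ f' ⟨hf', hfδ'⟩ hres_eq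
      refine key f hf f' hf' (hfδ.trans hfδ'.symm) fun j hj => ?_
      exact congrFun (congrArg ofLex hres_eq) ⟨j, hfδ ▸ hj⟩
    set Aδ : Set (Lex ({j : ι // j < δ₀} → Bool)) := res '' Bf with hAδ
    have hwfδ : Aδ.WellFoundedOn (· < ·) := by
      have hψ : ∀ p : Aδ, ∃ f : Lex (ι → Bool), f ∈ Bf ∧ res f = (p : _) := fun p => by
        obtain ⟨f, hf, hfp⟩ := p.2; exact ⟨f, hf, hfp⟩
      choose ψ hψBf hψres using hψ
      have hsub : ∀ p q : Aδ, (p : Lex ({j : ι // j < δ₀} → Bool)) < q → ψ p < ψ q := by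
        intro p q hpq
        rcases lt_trichotomy (ψ p) (ψ q) with h | h | h
        · exact h
        · exfalso
          have hpqe : (p : Lex ({j : ι // j < δ₀} → Bool)) = q := by
            rw [← hψres p, ← hψres q, h]
          rw [hpqe] at hpq
          exact lt_irrefl _ hpq
        · exfalso
          have := mono _ (hψBf q) _ (hψBf p) h
          rw [hψres p, hψres q] at this
          exact lt_irrefl _ (hpq.trans this)
      have hwfinv : WellFounded (fun p q : Aδ =>
          (fun a b : A => (a : Lex (ι → Bool)) < b)
            ⟨ψ p, (hψBf p).1.1⟩ ⟨ψ q, (hψBf q).1.1⟩) :=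
        InvImage.wf (fun p : Aδ => (⟨ψ p, (hψBf p).1.1⟩ : A)) hwfA
      exact Subrelation.wf (fun {p q} h => hsub p q h) hwfinv
    have hty' : Ordinal.type ((· < ·) : {j : ι // j < δ₀} → {j : ι // j < δ₀} → Prop) < o := by
      rw [← hty]
      have := Ordinal.typein_lt_type ((· < ·) : ι → ι → Prop) δ₀
      rw [← Ordinal.type_subrel] at this
      exact this
    have hIH := IH _ hty' {j : ι // j < δ₀} rfl Aδ hwfδ
    calc #Bf = #Aδ := (Cardinal.mk_image_eq_of_injOn res Bf hinjOn).symm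
      _ ≤ ℵ₀ ⊔ #{j : ι // j < δ₀} := hIH
      _ ≤ μ := sup_le_sup_left (Cardinal.mk_subtype_le _) _
  -- union over fibers
  have hBunion : B = ⋃ δ₀ : ι, {f | f ∈ B ∧ δ f = δ₀} := by
    ext f
    simp only [mem_iUnion, mem_setOf_eq]
    exact ⟨fun hf => ⟨δ f, hf, rfl⟩, fun ⟨_, hf, _⟩ => hf⟩
  have hBcard : #B ≤ μ := by
    calc #B = #(⋃ δ₀ : ι, {f | f ∈ B ∧ δ f = δ₀} : Set (Lex (ι → Bool))) := by
          rw [← hBunion]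
      _ ≤ #ι * ⨆ δ₀ : ι, #({f | f ∈ B ∧ δ f = δ₀} : Set (Lex (ι → Bool))) :=
          Cardinal.mk_iUnion_le _
      _ ≤ μ * μ := mul_le_mul' le_sup_right (ciSup_le' fiber_bound)
      _ = μ := Cardinal.mul_eq_self hμ0
  have hAsub : A ⊆ B ∪ (A \ B) := fun f hf => by
    by_cases h : f ∈ B
    · exact Or.inl h
    · exact Or.inr ⟨hf, h⟩
  calc #A ≤ #(B ∪ (A \ B) : Set (Lex (ι → Bool))) := Cardinal.mk_le_mk_of_subset hAsub
    _ ≤ #B + #(A \ B : Set (Lex (ι → Bool))) := Cardinal.mk_union_le _ _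
    _ ≤ μ + 1 := add_le_add hBcard (Cardinal.mk_le_one_iff_set_subsingleton.2 hABsub)
    _ = μ := Cardinal.add_one_eq hμ0

theorem chain_bound' (ι : Type u) [LinearOrder ι] [WellFoundedLT ι]
    (A : Set (Lex (ι → Bool))) (hA : A.WellFoundedOn (· < ·)) : #A ≤ ℵ₀ ⊔ #ι :=
  chain_bound _ ι rfl A hA

/-- For every infinite cardinal `κ` there is a metric space `(X,d)` with
`|X| = 2^κ` and scale `{0,1,2}` in which every equidistance subset has
cardinality `≤ κ`. -/
theorem stmt4 (κ : Cardinal.{u}) (hκ : Cardinal.aleph0 ≤ κ) :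
    ∃ (X : Type u) (d : X → X → ℝ),
      (∀ x y : X, d x y = 0 ↔ x = y) ∧
      (∀ x y : X, d x y = d y x) ∧
      (∀ x y z : X, d x z ≤ d x y + d y z) ∧
      Cardinal.mk X = 2 ^ κ ∧
      (Set.range fun p : X × X => d p.1 p.2) = {0, 1, 2} ∧
      ∀ Y : Set X,
        (∃ r : ℝ, 0 < r ∧ ∀ x ∈ Y, ∀ y ∈ Y, x ≠ y → d x y = r) →
        Cardinal.mk Y ≤ κ := by
  classical
  set ι := (Cardinal.ord κ).ToType with hι
  set X := Lex (ι → Bool) with hXdef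
  set W : X → X → Prop := WellOrderingRel with hW
  have hWwf : WellFounded W := (IsWellFounded.wf : WellFounded (WellOrderingRel (α := X)))
  have hWtri : ∀ x y : X, x ≠ y → W x y ∨ W y x := by
    intro x y h
    rcases trichotomous_of W x y with h1 | h1 | h1
    · exact Or.inl h1
    · exact absurd h1 h
    · exact Or.inr h1
  have hWasymm : ∀ x y : X, W x y → ¬ W y x := fun x y => hWwf.asymmetric x y
  -- the metric
  set d : X → X → ℝ := fun x y => if x = y then 0 else if (x < y ↔ W x y) then 1 else 2
    with hd
  have d_eq0 : ∀ x y : X, d x y = 0 ↔ x = y := by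
    intro x y
    by_cases h : x = y
    · simp [hd, h]
    · simp only [hd, if_neg h]
      constructor
      · intro h'
        by_cases hc : (x < y ↔ W x y) <;> simp [hc] at h' <;> norm_num at h'
      · intro h'; exact absurd h' h
  -- cardinality bound for lex-well-founded sets
  have hmkι : #ι = κ := Cardinal.mk_ord_toType κ
  have bound : ∀ Y : Set X, Y.WellFoundedOn (· < ·) → #Y ≤ κ := by
    intro Y hY
    have := chain_bound' ι Y hY
    rwa [hmkι, sup_eq_right.2 hκ] at this
  -- negation involution
  set neg : X → X := fun f => toLex fun i => !(ofLex f i) with hneg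
  have neg_neg : ∀ f, neg (neg f) = f := fun f => funext fun i => Bool.not_not _
  have neg_inj : Function.Injective neg := Function.LeftInverse.injective neg_neg
  have neg_anti : ∀ f g : X, f < g → neg g < neg f := by
    intro f g ⟨i, hag, hi⟩
    have hi' : ofLex f i = false ∧ ofLex g i = true := Bool.lt_iff.1 hi
    refine ⟨i, fun j hj => congrArg (!·) (hag j hj).symm, ?_⟩
    show ((!(ofLex g i)) < (!(ofLex f i)))
    rw [hi'.1, hi'.2]
    exact Bool.false_lt_true
  -- extraction lemmas for the metric values
  have d_cases : ∀ x y : X, x ≠ y → (d x y = 1 ∧ (x < y ↔ W x y)) ∨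
      (d x y = 2 ∧ ¬(x < y ↔ W x y)) := by
    intro x y h
    by_cases hc : (x < y ↔ W x y)
    · exact Or.inl ⟨by simp [hd, h, hc], hc⟩
    · exact Or.inr ⟨by simp [hd, h, hc], hc⟩
  -- equidistant sets are small
  have key : ∀ Y : Set X,
      (∃ r : ℝ, 0 < r ∧ ∀ x ∈ Y, ∀ y ∈ Y, x ≠ y → d x y = r) → #Y ≤ κ := by
    rintro Y ⟨r, hr, hYr⟩
    by_cases hYs : Y.Subsingleton
    · exact le_trans (Cardinal.mk_le_one_iff_set_subsingleton.2 hYs)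
        (le_trans Cardinal.one_le_aleph0 hκ)
    rw [Set.not_subsingleton_iff] at hYs
    obtain ⟨x0, hx0, y0, hy0, hxy0⟩ := hYs
    rcases d_cases x0 y0 hxy0 with ⟨h1, _⟩ | ⟨h1, _⟩
    · -- r = 1 : the orders agree on Y
      have hrr : r = 1 := by rw [← hYr x0 hx0 y0 hy0 hxy0, h1]
      have hagree : ∀ x ∈ Y, ∀ y ∈ Y, x ≠ y → (x < y ↔ W x y) := by
        intro x hx y hy hxy
        rcases d_cases x y hxy with ⟨_, hc⟩ | ⟨h2, _⟩
        · exact hc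
        · rw [hYr x hx y hy hxy, hrr] at h2; norm_num at h2
      have hwf : Y.WellFoundedOn (· < ·) := by
        have : WellFounded (fun a b : Y => W (a : X) b) :=
          InvImage.wf (fun a : Y => (a : X)) hWwf
        exact Subrelation.wf
          (fun {a b} h => (hagree a a.2 b b.2 (fun he => absurd (Subtype.coe_injective
            (by exact_mod_cast he) ▸ h) (lt_irrefl _))).1 h) this
      exact bound Y hwf
    · -- r = 2 : the orders are opposite on Y; use the negation involution
      have hrr : r = 2 := by rw [← hYr x0 hx0 y0 hy0 hxy0, h1]
      have hdisagree : ∀ x ∈ Y, ∀ y ∈ Y, x ≠ y → ¬(x < y ↔ W x y) := by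
        intro x hx y hy hxy
        rcases d_cases x y hxy with ⟨h2, _⟩ | ⟨_, hc⟩
        · rw [hYr x hx y hy hxy, hrr] at h2; norm_num at h2
        · exact hc
      set Z : Set X := neg '' Y with hZ
      have hZwf : Z.WellFoundedOn (· < ·) := by
        have hwfinv : WellFounded (fun a b : Z => W (neg (a : X)) (neg (b : X))) :=
          InvImage.wf (fun a : Z => neg (a : X)) hWwf
        refine Subrelation.wf (fun {a b} h => ?_) hwfinv
        -- a < b in Z; then neg b < neg a in Y, distinct, so W (neg a) (neg b)
        have hna : neg (a : X) ∈ Y := by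
          obtain ⟨x, hx, hxa⟩ := a.2
          rw [← hxa, neg_neg]; exact hx
        have hnb : neg (b : X) ∈ Y := by
          obtain ⟨x, hx, hxb⟩ := b.2
          rw [← hxb, neg_neg]; exact hx
        have hne : neg (b : X) ≠ neg (a : X) := fun he =>
          absurd (neg_inj he ▸ (show (a : X) < b from h)) (lt_irrefl _)
        have hlt : neg (b : X) < neg (a : X) := neg_anti _ _ h
        have hnd := hdisagree _ hnb _ hna hne
        -- ¬(neg b < neg a ↔ W (neg b) (neg a)), and neg b < neg a holds, so ¬ W (neg b) (neg a)
        have : ¬ W (neg (b : X)) (neg (a : X)) := fun hw => hnd ⟨fun _ => hw, fun _ => hlt⟩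
        rcases hWtri _ _ hne with hw | hw
        · exact absurd hw this
        · exact hw
      have : #Z ≤ κ := bound Z hZwf
      rwa [hZ, Cardinal.mk_image_eq neg_inj] at this
  -- symmetry
  have d_symm : ∀ x y : X, d x y = d y x := by
    intro x y
    by_cases h : x = y
    · rw [h]
    have h' : y ≠ x := fun he => h he.symm
    have hltiff : x < y ↔ ¬ y < x := by
      constructor
      · exact fun h1 h2 => lt_irrefl _ (h1.trans h2)
      · intro h1; rcases lt_or_gt_of_ne h with h2 | h2
        · exact h2
        · exact absurd h2 h1
    have hWiff : W x y ↔ ¬ W y x := by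
      constructor
      · exact hWasymm x y
      · intro h1; rcases hWtri x y h with h2 | h2
        · exact h2
        · exact absurd h2 h1
    have : (x < y ↔ W x y) ↔ (y < x ↔ W y x) := by
      rw [hltiff, hWiff]; tauto
    simp only [hd, if_neg h, if_neg h']
    by_cases hc : (x < y ↔ W x y)
    · rw [if_pos hc, if_pos (this.1 hc)]
    · rw [if_neg hc, if_neg (fun hc2 => hc (this.2 hc2))]
  -- bounds for triangle inequality
  have d_vals : ∀ x y : X, d x y = 0 ∨ d x y = 1 ∨ d x y = 2 := by
    intro x y
    by_cases h : x = y
    · left; exact (d_eq0 x y).2 h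
    rcases d_cases x y h with ⟨h1, _⟩ | ⟨h1, _⟩
    · right; left; exact h1
    · right; right; exact h1
  have d_nonneg : ∀ x y : X, 0 ≤ d x y := by
    intro x y; rcases d_vals x y with h | h | h <;> rw [h] <;> norm_num
  have d_le2 : ∀ x y : X, d x y ≤ 2 := by
    intro x y; rcases d_vals x y with h | h | h <;> rw [h] <;> norm_num
  have d_ge1 : ∀ x y : X, x ≠ y → 1 ≤ d x y := by
    intro x y h
    rcases d_cases x y h with ⟨h1, _⟩ | ⟨h1, _⟩ <;> rw [h1] <;> norm_num
  have d_tri : ∀ x y z : X, d x z ≤ d x y + d y z := by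
    intro x y z
    by_cases hxz : x = z
    · rw [(d_eq0 x z).2 hxz]
      exact add_nonneg (d_nonneg x y) (d_nonneg y z)
    by_cases hxy : x = y
    · rw [hxy, (d_eq0 y y).2 rfl, zero_add]
    by_cases hyz : y = z
    · rw [hyz, (d_eq0 z z).2 rfl, add_zero]
    calc d x z ≤ 2 := d_le2 x z
      _ = 1 + 1 := by norm_num
      _ ≤ d x y + d y z := add_le_add (d_ge1 x y hxy) (d_ge1 y z hyz)
  -- cardinality of X
  have hcard : #X = 2 ^ κ := by
    have h1 : #X = #(ι → Bool) := Cardinal.mk_congr (ofLex : X ≃ (ι → Bool))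
    rw [h1, Cardinal.mk_arrow]
    simp [hmkι]
  -- range of d
  have hκlt : κ < 2 ^ κ := Cardinal.cantor κ
  have exists_agree : ∃ x y : X, x ≠ y ∧ (x < y ↔ W x y) := by
    by_contra hcon
    have : #(univ : Set X) ≤ κ := by
      refine key univ ⟨2, by norm_num, fun x _ y _ hxy => ?_⟩
      rcases d_cases x y hxy with ⟨_, hc⟩ | ⟨h2, _⟩
      · exact absurd ⟨x, y, hxy, hc⟩ hcon
      · exact h2
    rw [Cardinal.mk_univ, hcard] at this
    exact absurd this (not_le_of_gt hκlt)
  have exists_disagree : ∃ x y : X, x ≠ y ∧ ¬(x < y ↔ W x y) := by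
    by_contra hcon
    have : #(univ : Set X) ≤ κ := by
      refine key univ ⟨1, by norm_num, fun x _ y _ hxy => ?_⟩
      rcases d_cases x y hxy with ⟨h2, _⟩ | ⟨_, hc⟩
      · exact h2
      · exact absurd ⟨x, y, hxy, hc⟩ hcon
    rw [Cardinal.mk_univ, hcard] at this
    exact absurd this (not_le_of_gt hκlt)
  have hrange : (Set.range fun p : X × X => d p.1 p.2) = {0, 1, 2} := by
    apply subset_antisymm
    · rintro v ⟨⟨x, y⟩, rfl⟩
      show d x y ∈ ({0, 1, 2} : Set ℝ)
      rcases d_vals x y with h | h | h <;> rw [h] <;> simp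
    · intro v hv
      simp only [Set.mem_insert_iff, Set.mem_singleton_iff] at hv
      rcases hv with h | h | h
      · refine ⟨(toLex fun _ => false, toLex fun _ => false), ?_⟩
        rw [h]; exact (d_eq0 _ _).2 rfl
      · obtain ⟨x, y, hxy, hc⟩ := exists_agree
        refine ⟨(x, y), ?_⟩
        rw [h]; simp [hd, hxy, hc]
      · obtain ⟨x, y, hxy, hc⟩ := exists_disagree
        refine ⟨(x, y), ?_⟩
        rw [h]; simp [hd, hxy, hc]
  exact ⟨X, d, d_eq0, d_symm, d_tri, hcard, hrange, key⟩
end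

section
/- Let (X,d) be a metric space whose scale d(X,X) is infinite of cardinality κ. If |X| ≥ (2^κ)^+ (the cardinal successor of 2^κ), then there exists an equidistance subset Y of (X,d) with |Y| = κ^+. -/
universe u

/-- Auxiliary witness trees used to build a "type-closed" subset of a metric space. -/
inductive ERTree (I : Type u) (S : Type) : Type u
  | base : ERTree I S
  | op (f : I → ERTree I S) (g : I → S) : ERTree I S

namespace ERTree

variable {I : Type u} {S : Type}

/-- Encoding of trees as partial labelings of `List I`, to bound cardinality. -/
def enc : ERTree I S → List I → Option (I → S)
  | base, _ => none
  | op _ g, [] => some g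
  | op f _, (i :: l) => enc (f i) l

theorem enc_injective : Function.Injective (enc (I := I) (S := S)) := by
  intro t₁
  induction t₁ with
  | base =>
    intro t₂ h
    cases t₂ with
    | base => rfl
    | op f g => exact absurd (congrFun h []).symm (by simp [enc])
  | op f g ih =>
    intro t₂ h
    cases t₂ with
    | base => exact absurd (congrFun h []) (by simp [enc])
    | op f' g' =>
      have hg : g = g' := by
        have := congrFun h []
        simpa [enc] using this
      have hf : f = f' := funext fun i => ih i (funext fun l => congrFun h (i :: l))
      rw [hg, hf]

/-- Evaluation of witness trees in `X`. -/
def evalT {X : Type u} (W : (I → X) → (I → S) → X) (x₀ : X) : ERTree I S → X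
  | base => x₀
  | op f g => W (fun i => evalT W x₀ (f i)) g

end ERTree

open Classical in
noncomputable def erSeq {X : Type u} [MetricSpace X] {O I : Type u} [LinearOrder O]
    [WellFoundedLT O] (z : X) (A : Set X) (hA : A.Nonempty)
    (hclosed : ∀ f : I → X, (∀ i, f i ∈ A) →
      ∃ y, y ∈ A ∧ ∀ i, dist (f i) y = dist (f i) z)
    (σ : ∀ α : O, Nonempty (Set.Iio α) → I → Set.Iio α) : O → ↥A :=
  WellFounded.fix wellFounded_lt
    (fun α (IH : ∀ β, β < α → ↥A) =>
      if h : Nonempty (Set.Iio α) then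
        ⟨(hclosed (fun i => (IH (σ α h i).1 (σ α h i).2 : X))
            (fun i => (IH (σ α h i).1 (σ α h i).2).2)).choose,
         (hclosed (fun i => (IH (σ α h i).1 (σ α h i).2 : X))
            (fun i => (IH (σ α h i).1 (σ α h i).2).2)).choose_spec.1⟩
      else ⟨hA.choose, hA.choose_spec⟩)

open Classical in
theorem erSeq_spec {X : Type u} [MetricSpace X] {O I : Type u} [LinearOrder O]
    [WellFoundedLT O] (z : X) (A : Set X) (hA : A.Nonempty)
    (hclosed : ∀ f : I → X, (∀ i, f i ∈ A) →
      ∃ y, y ∈ A ∧ ∀ i, dist (f i) y = dist (f i) z)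
    (σ : ∀ α : O, Nonempty (Set.Iio α) → I → Set.Iio α)
    (hσ : ∀ (α : O) (h : Nonempty (Set.Iio α)), Function.Surjective (σ α h))
    (α β : O) (hβ : β < α) :
    dist (erSeq z A hA hclosed σ β : X) (erSeq z A hA hclosed σ α : X)
      = dist (erSeq z A hA hclosed σ β : X) z := by
  have h : Nonempty (Set.Iio α) := ⟨⟨β, hβ⟩⟩
  have hu : erSeq z A hA hclosed σ α =
      ((if h : Nonempty (Set.Iio α) then
        ⟨(hclosed (fun i => (erSeq z A hA hclosed σ (σ α h i).1 : X))
            (fun i => (erSeq z A hA hclosed σ (σ α h i).1).2)).choose,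
         (hclosed (fun i => (erSeq z A hA hclosed σ (σ α h i).1 : X))
            (fun i => (erSeq z A hA hclosed σ (σ α h i).1).2)).choose_spec.1⟩
      else ⟨hA.choose, hA.choose_spec⟩ : ↥A)) := by
    rw [erSeq]
    exact WellFounded.fix_eq _ _ _
  rw [hu, dif_pos h]
  obtain ⟨i, hi⟩ := hσ α h ⟨β, hβ⟩
  have hd := (hclosed (fun i => (erSeq z A hA hclosed σ (σ α h i).1 : X))
      (fun i => (erSeq z A hA hclosed σ (σ α h i).1).2)).choose_spec.2 i
  rw [hi] at hd
  exact hd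


/-- If the scale of a metric space is infinite of cardinality `κ` and
`|X| ≥ (2^κ)⁺`, then there is an equidistance subset of cardinality `κ⁺`. -/
theorem stmt5 {X : Type u} [MetricSpace X] (κ : Cardinal.{u})
    (hinf : (Set.range fun p : X × X => dist p.1 p.2).Infinite)
    (hκ : Cardinal.lift.{u}
      (Cardinal.mk ↥(Set.range fun p : X × X => dist p.1 p.2)) = κ)
    (hX : Order.succ (2 ^ κ) ≤ Cardinal.mk X) :
    ∃ Y : Set X, EquidistanceSubset Y ∧ Cardinal.mk Y = Order.succ κ := by
  classical
  set Sc : Set ℝ := Set.range fun p : X × X => dist p.1 p.2 with hSc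
  have hScinf : Infinite ↥Sc := hinf.to_subtype
  have hκinf : Cardinal.aleph0 ≤ κ := by
    rw [← hκ, ← Cardinal.lift_aleph0.{u, 0}]
    exact Cardinal.lift_le.2 (Cardinal.aleph0_le_mk ↥Sc)
  have hsucc : (2 : Cardinal) ^ κ < Order.succ (2 ^ κ) := Order.lt_succ _
  have hXpos : (0 : Cardinal) < Cardinal.mk X :=
    lt_of_le_of_lt zero_le (lt_of_lt_of_le hsucc hX)
  have hXne : Nonempty X := Cardinal.mk_ne_zero_iff.1 hXpos.ne'
  have h2κinf : Cardinal.aleph0 ≤ 2 ^ κ := hκinf.trans (Cardinal.cantor κ).le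
  -- index type of size κ
  set I : Type u := κ.out with hI
  have hmkI : Cardinal.mk I = κ := Cardinal.mk_out κ
  haveI : Infinite I := Cardinal.infinite_iff.2 (by rw [hmkI]; exact hκinf)
  -- witness operator
  set W : (I → X) → (I → ↥Sc) → X := fun f g =>
    if h : ∃ y : X, ∀ i, dist (f i) y = (g i : ℝ) then h.choose
    else Classical.arbitrary X with hWdef
  have hW : ∀ (f : I → X) (g : I → ↥Sc) (h : ∃ y : X, ∀ i, dist (f i) y = (g i : ℝ)),
      ∀ i, dist (f i) (W f g) = (g i : ℝ) := by
    intro f g h i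
    simp only [hWdef, dif_pos h]
    exact h.choose_spec i
  set ev : ERTree I ↥Sc → X := ERTree.evalT W (Classical.arbitrary X) with hevdef
  set A : Set X := Set.range ev with hAdef
  have hAne : A.Nonempty := ⟨ev ERTree.base, ⟨ERTree.base, rfl⟩⟩
  -- |A| ≤ 2 ^ κ
  have harrow : Cardinal.mk (I → ↥Sc) = 2 ^ κ := by
    rw [Cardinal.mk_arrow, hκ, Cardinal.lift_id', hmkI]
    exact Cardinal.power_self_eq hκinf
  have hAcard : Cardinal.mk ↥A ≤ 2 ^ κ := by
    calc Cardinal.mk ↥A ≤ Cardinal.mk (ERTree I ↥Sc) := Cardinal.mk_range_le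
      _ ≤ Cardinal.mk (List I → Option (I → ↥Sc)) :=
          Cardinal.mk_le_of_injective ERTree.enc_injective
      _ = Cardinal.mk (Option (I → ↥Sc)) ^ Cardinal.mk (List I) :=
          (Cardinal.power_def _ _).symm
      _ = (2 ^ κ) ^ κ := by
          rw [Cardinal.mk_option, harrow, Cardinal.add_one_eq h2κinf,
            Cardinal.mk_list_eq_mk, hmkI]
      _ = 2 ^ (κ * κ) := by rw [← Cardinal.power_mul]
      _ = 2 ^ κ := by rw [Cardinal.mul_eq_self hκinf]
  -- pick z outside A
  obtain ⟨z, hz⟩ : ∃ z, z ∉ A := by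
    by_contra hc
    push_neg at hc
    have huniv : A = Set.univ := Set.eq_univ_of_forall hc
    have : Cardinal.mk ↥A = Cardinal.mk X := by rw [huniv, Cardinal.mk_univ]
    exact absurd (hX.trans (this ▸ hAcard)) (not_le.2 hsucc)
  -- A is closed under realizing distance-types to z
  have hclosed : ∀ f : I → X, (∀ i, f i ∈ A) →
      ∃ y, y ∈ A ∧ ∀ i, dist (f i) y = dist (f i) z := by
    intro f hf
    choose c hc using hf
    set g : I → ↥Sc := fun i => ⟨dist (f i) z, ⟨(f i, z), rfl⟩⟩ with hg
    have hex : ∃ y : X, ∀ i, dist ((fun i => ev (c i)) i) y = (g i : ℝ) :=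
      ⟨z, fun i => by simp only [hg]; rw [hc i]⟩
    refine ⟨W (fun i => ev (c i)) g, ⟨ERTree.op c g, by simp [hevdef, ERTree.evalT]⟩, ?_⟩
    intro i
    have hdi := hW _ _ hex i
    rw [hc i] at hdi
    exact hdi
  -- the well-ordered index type of size κ⁺
  set O : Type u := (Order.succ κ).ord.ToType with hO
  have hmkO : Cardinal.mk O = Order.succ κ := by
    rw [hO, Cardinal.mk_toType, Cardinal.card_ord]
  have hsig : ∀ α : O, Nonempty (Set.Iio α) → ∃ s : I → Set.Iio α, Function.Surjective s := by
    intro α h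
    have h1 : Cardinal.mk ↥(Set.Iio α) < Order.succ κ := Cardinal.mk_Iio_ord_toType α
    have h2 : Cardinal.mk ↥(Set.Iio α) ≤ κ := Order.lt_succ_iff.1 h1
    obtain ⟨e⟩ := (Cardinal.le_def _ _).1 (h2.trans_eq hmkI.symm)
    exact ⟨Function.invFun e, Function.invFun_surjective e.injective⟩
  set σ : ∀ α : O, Nonempty (Set.Iio α) → I → Set.Iio α :=
    fun α h => (hsig α h).choose with hσdef
  have hσ : ∀ (α : O) (h : Nonempty (Set.Iio α)), Function.Surjective (σ α h) :=
    fun α h => (hsig α h).choose_spec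
  set a : O → ↥A := erSeq z A hAne hclosed σ with hadef
  have key : ∀ (α β : O), β < α → dist (a β : X) (a α : X) = dist (a β : X) z :=
    erSeq_spec z A hAne hclosed σ hσ
  have hne_z : ∀ α : O, (a α : X) ≠ z := fun α h => hz (h ▸ (a α).2)
  have hinj : Function.Injective (fun α : O => (a α : X)) := by
    intro β γ hbg
    simp only at hbg
    by_contra hne'
    rcases lt_or_gt_of_ne hne' with hlt | hlt
    · have := key γ β hlt
      rw [hbg, dist_self] at this
      exact (dist_pos.2 (hne_z γ)).ne this
    · have := key β γ hlt
      rw [← hbg, dist_self] at this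
      exact (dist_pos.2 (hne_z β)).ne this
  -- pigeonhole
  set G : O → ULift.{u} ↥Sc := fun α => ⟨⟨dist (a α : X) z, ⟨((a α : X), z), rfl⟩⟩⟩ with hGdef
  have hcof : (Order.succ κ).ord.cof = Order.succ κ := (Cardinal.isRegular_succ hκinf).cof_eq
  have hGα : Cardinal.mk (ULift.{u} ↥Sc) < (Order.succ κ).ord.cof := by
    rw [hcof, Cardinal.mk_uLift, hκ]
    exact Order.lt_succ _
  obtain ⟨s, hs⟩ := Cardinal.infinite_pigeonhole_card G (Order.succ κ) hmkO.ge
    (hκinf.trans (Order.le_succ κ)) hGα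
  obtain ⟨P, hP⟩ := Cardinal.le_mk_iff_exists_set.1 hs
  set Q : Set O := Subtype.val '' P with hQdef
  have hQ : Cardinal.mk ↥Q = Order.succ κ := by
    rw [hQdef, Cardinal.mk_image_eq Subtype.val_injective, hP]
  have hQs : ∀ β ∈ Q, G β = s := by
    rintro β ⟨⟨β', hβ'⟩, _, rfl⟩
    exact hβ'
  have hQne : Q.Nonempty := by
    rw [← Set.nonempty_coe_sort, ← Cardinal.mk_ne_zero_iff, hQ]
    exact (lt_of_le_of_lt zero_le (Order.lt_succ κ)).ne'
  obtain ⟨β₀, hβ₀⟩ := hQne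
  set r : ℝ := (s.down : ℝ) with hrdef
  have hdist : ∀ β ∈ Q, dist (a β : X) z = r := by
    intro β hβ
    have := congrArg (fun t : ULift.{u} ↥Sc => (t.down : ℝ)) (hQs β hβ)
    exact this
  have hrpos : 0 < r := by
    rw [← hdist β₀ hβ₀]
    exact dist_pos.2 (hne_z β₀)
  refine ⟨(fun α : O => (a α : X)) '' Q, ⟨r, hrpos, ?_⟩, ?_⟩
  · rintro x ⟨α, hα, rfl⟩ y ⟨γ, hγ, rfl⟩ hxy
    have hαγ : α ≠ γ := fun h => hxy (by rw [h])
    rcases lt_or_gt_of_ne hαγ with hlt | hlt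
    · rw [key γ α hlt, hdist α hα]
    · rw [dist_comm, key α γ hlt, hdist γ hγ]
  · rw [Cardinal.mk_image_eq hinj, hQ]
end

section
/- For every infinite metric space (X,d) there exists an injective sequence (x_n)_{n∈ω} in X such that one of the following holds: (i) the sequence (d(x_0, x_n))_{n≥1} is strictly increasing; (ii) the sequence (d(x_0, x_n))_{n≥1} is strictly decreasing; (iii) for every n ∈ ω and all i, j with i > n and j > n, one has d(x_n, x_i) = d(x_n, x_j). -/
/-- In every infinite metric space there is an injective sequence `(x n)` such
that either `(dist (x 0) (x n))_{n ≥ 1}` is strictly increasing, or it is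
strictly decreasing, or for every `n` the distance `dist (x n) (x i)` does not
depend on `i > n`. -/
theorem stmt6 {X : Type*} [MetricSpace X] [Infinite X] :
    ∃ x : ℕ → X, Function.Injective x ∧
      (StrictMono (fun n : ℕ => dist (x 0) (x (n + 1))) ∨
       StrictAnti (fun n : ℕ => dist (x 0) (x (n + 1))) ∨
       ∀ n i j : ℕ, n < i → n < j → dist (x n) (x i) = dist (x n) (x j)) := by
  classical
  by_cases hfin : ∀ x : X, (Set.range (dist x : X → ℝ)).Finite
  · -- case (iii)
    have step : ∀ S : Set X, S.Infinite →
        ∃ (a : X) (T : Set X), a ∈ S ∧ T ⊆ S ∧ T.Infinite ∧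
          (∀ y ∈ T, y ≠ a) ∧ ∀ y ∈ T, ∀ z ∈ T, dist a y = dist a z := by
      intro S hS
      obtain ⟨a, ha⟩ := hS.nonempty
      have hS' : (S \ {a}).Infinite := hS.diff (Set.finite_singleton a)
      have hex : ∃ r ∈ Set.range (dist a), ((S \ {a}) ∩ dist a ⁻¹' {r}).Infinite := by
        by_contra hcon
        push_neg at hcon
        have hsub : (S \ {a}) ⊆ ⋃ r ∈ Set.range (dist a),
            ((S \ {a}) ∩ dist a ⁻¹' {r}) := by
          intro y hy
          exact Set.mem_biUnion ⟨y, rfl⟩ ⟨hy, rfl⟩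
        have hfinU : (⋃ r ∈ Set.range (dist a),
            ((S \ {a}) ∩ dist a ⁻¹' {r})).Finite :=
          (hfin a).biUnion fun r hr => hcon r hr
        exact hS' (hfinU.subset hsub)
      obtain ⟨r, _, hrinf⟩ := hex
      refine ⟨a, (S \ {a}) ∩ dist a ⁻¹' {r}, ha, fun y hy => hy.1.1, hrinf,
        fun y hy => hy.1.2, fun y hy z hz => ?_⟩
      have h1 : dist a y = r := hy.2
      have h2 : dist a z = r := hz.2
      rw [h1, h2]
    choose a T ha hTsub hTinf hTne hTc using step
    let F : ℕ → {S : Set X // S.Infinite} := fun n =>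
      Nat.rec ⟨Set.univ, Set.infinite_univ⟩
        (fun _ p => ⟨T p.1 p.2, hTinf p.1 p.2⟩) n
    have hF : ∀ n, (F (n + 1)).1 = T (F n).1 (F n).2 := fun n => rfl
    set x : ℕ → X := fun n => a (F n).1 (F n).2 with hx
    have hxmem : ∀ n, x n ∈ (F n).1 := fun n => ha _ _
    have hmono : ∀ m n, m ≤ n → (F n).1 ⊆ (F m).1 := by
      intro m n hmn
      induction n with
      | zero => simp [Nat.le_zero.mp hmn]
      | succ k ih =>
        rcases Nat.le_succ_iff_eq_or_le.mp hmn with h | h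
        · subst h; exact Set.Subset.rfl
        · exact (hTsub (F k).1 (F k).2).trans (ih h)
    have hmemT : ∀ n i, n < i → x i ∈ T (F n).1 (F n).2 := by
      intro n i hni
      have : x i ∈ (F (n + 1)).1 := hmono _ _ hni (hxmem i)
      rwa [hF] at this
    have hinj : Function.Injective x := by
      intro m n hmn
      by_contra hne
      rcases Ne.lt_or_gt hne with h | h
      · exact hTne _ _ _ (hmemT m n h) hmn.symm
      · exact hTne _ _ _ (hmemT n m h) hmn
    exact ⟨x, hinj, Or.inr (Or.inr fun n i j hni hnj =>
      hTc _ _ _ (hmemT n i hni) _ (hmemT n j hnj))⟩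
  · push_neg at hfin
    obtain ⟨x0, hx0⟩ := hfin
    have hx0' : (Set.range (dist x0 : X → ℝ)).Infinite := hx0
    let e := hx0'.natEmbedding
    set f : ℕ → ℝ := fun n => (e n : ℝ) with hfdef
    have hfinj : Function.Injective f := fun m n h =>
      e.injective (Subtype.val_injective h)
    have hy : ∀ n, ∃ y : X, dist x0 y = f n := fun n => (e n).2
    choose y hy using hy
    have hfnonneg : ∀ n, 0 ≤ f n := fun n => (hy n) ▸ dist_nonneg
    haveI : IsTrans ℝ (· < · : ℝ → ℝ → Prop) := ⟨fun _ _ _ => lt_trans⟩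
    obtain ⟨g, hg | hg⟩ := exists_increasing_or_nonincreasing_subseq
      (· < · : ℝ → ℝ → Prop) f
    · -- strictly increasing case
      set x : ℕ → X := fun n => if n = 0 then x0 else y (g n) with hxdef
      have hd : ∀ n : ℕ, dist (x 0) (x (n + 1)) = f (g (n + 1)) := by
        intro n; simp [hxdef, hy]
      have hpos : ∀ n : ℕ, 0 < f (g (n + 1)) :=
        fun n => lt_of_le_of_lt (hfnonneg (g 0)) (hg 0 (n + 1) (Nat.succ_pos n))
      have hinj : Function.Injective x := by
        intro m n hmn
        by_contra hne
        wlog h : m < n generalizing m n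
        · exact this hmn.symm (Ne.symm hne) ((Ne.lt_or_gt hne).resolve_left h)
        rcases Nat.eq_zero_or_pos m with hm | hm
        · subst hm
          obtain ⟨k, rfl⟩ := Nat.exists_eq_add_of_lt h
          have : dist (x 0) (x (0 + k + 1)) = 0 := by rw [← hmn]; simp
          rw [hd] at this
          exact absurd this (ne_of_gt (hpos _))
        · obtain ⟨m', rfl⟩ := Nat.exists_eq_add_of_lt hm
          obtain ⟨n', hn'⟩ : ∃ n', n = n' + 1 :=
            ⟨n - 1, by omega⟩
          subst hn'
          have hxm : x (0 + m' + 1) = y (g (0 + m' + 1)) := by simp [hxdef]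
          have hxn : x (n' + 1) = y (g (n' + 1)) := by simp [hxdef]
          rw [hxm, hxn] at hmn
          have : f (g (0 + m' + 1)) = f (g (n' + 1)) := by
            rw [← hy, ← hy, hmn]
          have := hfinj this
          have := g.injective this
          omega
      refine ⟨x, hinj, Or.inl ?_⟩
      intro m n hmnlt
      simp only [hd]
      exact hg _ _ (by omega)
    · -- strictly decreasing case
      have hg' : ∀ m n : ℕ, m < n → f (g n) < f (g m) := by
        intro m n hmnlt
        rcases lt_trichotomy (f (g n)) (f (g m)) with h | h | h
        · exact h
        · exact absurd (g.injective (hfinj h)) (by omega)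
        · exact absurd h (hg m n hmnlt)
      set x : ℕ → X := fun n => if n = 0 then x0 else y (g n) with hxdef
      have hd : ∀ n : ℕ, dist (x 0) (x (n + 1)) = f (g (n + 1)) := by
        intro n; simp [hxdef, hy]
      have hpos : ∀ n : ℕ, 0 < f (g (n + 1)) :=
        fun n => lt_of_le_of_lt (hfnonneg (g (n + 2))) (hg' (n + 1) (n + 2) (by omega))
      have hinj : Function.Injective x := by
        intro m n hmn
        by_contra hne
        wlog h : m < n generalizing m n
        · exact this hmn.symm (Ne.symm hne) ((Ne.lt_or_gt hne).resolve_left h)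
        rcases Nat.eq_zero_or_pos m with hm | hm
        · subst hm
          obtain ⟨k, rfl⟩ := Nat.exists_eq_add_of_lt h
          have : dist (x 0) (x (0 + k + 1)) = 0 := by rw [← hmn]; simp
          rw [hd] at this
          exact absurd this (ne_of_gt (hpos _))
        · obtain ⟨m', rfl⟩ := Nat.exists_eq_add_of_lt hm
          obtain ⟨n', hn'⟩ : ∃ n', n = n' + 1 := ⟨n - 1, by omega⟩
          subst hn'
          have hxm : x (0 + m' + 1) = y (g (0 + m' + 1)) := by simp [hxdef]
          have hxn : x (n' + 1) = y (g (n' + 1)) := by simp [hxdef]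
          rw [hxm, hxn] at hmn
          have : f (g (0 + m' + 1)) = f (g (n' + 1)) := by
            rw [← hy, ← hy, hmn]
          have := hfinj this
          have := g.injective this
          omega
      refine ⟨x, hinj, Or.inr (Or.inl ?_)⟩
      intro m n hmnlt
      simp only [hd]
      exact hg' _ _ (by omega)
end

section
/- Let (X,d) be an infinite metric space and let {X_n : n ∈ ω} be a family of nonempty pairwise disjoint subsets of X such that d(X_i, X_j) ∩ d(X_n, X_n) = ∅ for all n and all distinct i, j (where d(A,B) = {d(a,b) : a ∈ A, b ∈ B}). Let 𝒰 be a metrically Ramsey ultrafilter on X such that ⋃_{n<ω} X_n ∈ 𝒰 and X_n ∉ 𝒰 for each n < ω. Then there exists U ∈ 𝒰 such that |U ∩ X_n| ≤ 1 for each n < ω. -/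
/-- A `{0,1}`-coloring of pairs is isometric if it only depends on the distance. -/
def IsIsometricColoring {X : Type*} [MetricSpace X] (χ : X → X → Bool) : Prop :=
  ∀ x y z t : X, dist x y = dist z t → χ x y = χ z t

/-- `[U]²` is monochrome for the coloring `χ`. -/
def MonochromeOn {X : Type*} (χ : X → X → Bool) (U : Set X) : Prop :=
  ∃ k : Bool, ∀ x ∈ U, ∀ y ∈ U, x ≠ y → χ x y = k

/-- An ultrafilter is free if it is not principal. -/
def IsFreeUltrafilter {X : Type*} (𝒰 : Ultrafilter X) : Prop :=
  ∀ x : X, 𝒰 ≠ pure x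

/-- An ultrafilter is metrically Ramsey if every isometric coloring has a
monochrome member. -/
def MetricallyRamsey {X : Type*} [MetricSpace X] (𝒰 : Ultrafilter X) : Prop :=
  ∀ χ : X → X → Bool, IsIsometricColoring χ → ∃ U ∈ 𝒰, MonochromeOn χ U

/-- The set of distances between two subsets. -/
def distSet {X : Type*} [MetricSpace X] (A B : Set X) : Set ℝ :=
  {r : ℝ | ∃ a ∈ A, ∃ b ∈ B, dist a b = r}

/-- Proposition 1.6(i): given a family of nonempty pairwise disjoint subsets
whose cross distances avoid the inner distances, a metrically Ramsey
ultrafilter containing the union but no single piece has a member meeting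
each piece in at most one point. -/
theorem stmt7 {X : Type*} [MetricSpace X] [Infinite X] (Xs : ℕ → Set X)
    (hne : ∀ n, (Xs n).Nonempty)
    (hdisj : ∀ i j, i ≠ j → Disjoint (Xs i) (Xs j))
    (hdist : ∀ n i j, i ≠ j → distSet (Xs i) (Xs j) ∩ distSet (Xs n) (Xs n) = ∅)
    (𝒰 : Ultrafilter X) (hfree : IsFreeUltrafilter 𝒰)
    (hMR : MetricallyRamsey 𝒰)
    (hunion : (⋃ n, Xs n) ∈ 𝒰) (hnot : ∀ n, Xs n ∉ 𝒰) :
    ∃ U ∈ 𝒰, ∀ n, (U ∩ Xs n).Subsingleton := by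
  classical
  set χ : X → X → Bool := fun x y => decide (∃ n, dist x y ∈ distSet (Xs n) (Xs n)) with hχ
  have hiso : IsIsometricColoring χ := by
    intro x y z t h
    simp only [hχ, h]
  obtain ⟨U, hU, k, hk⟩ := hMR χ hiso
  have hmem : U ∩ ⋃ m, Xs m ∈ 𝒰 := Filter.inter_mem hU hunion
  have key : k = false := by
    by_contra hk'
    have hk1 : k = true := by cases k <;> simp_all
    obtain ⟨x, hxU, hxun⟩ := Filter.nonempty_of_mem hmem
    obtain ⟨n, hxn⟩ := Set.mem_iUnion.1 hxun
    have hsub : U ∩ ⋃ m, Xs m ⊆ Xs n := by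
      rintro y ⟨hyU, hyun⟩
      obtain ⟨m, hym⟩ := Set.mem_iUnion.1 hyun
      by_cases hxy : x = y
      · exact hxy ▸ hxn
      · have hc := hk x hxU y hyU hxy
        rw [hk1] at hc
        have hex : ∃ p, dist x y ∈ distSet (Xs p) (Xs p) := by
          simpa [hχ] using hc
        obtain ⟨p, hp⟩ := hex
        by_cases hnm : n = m
        · exact hnm ▸ hym
        · exfalso
          have hmemd : dist x y ∈ distSet (Xs n) (Xs m) := ⟨x, hxn, y, hym, rfl⟩
          have := hdist p n m hnm
          exact Set.eq_empty_iff_forall_notMem.1 this (dist x y) ⟨hmemd, hp⟩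
    exact hnot n (𝒰.mem_of_superset hmem hsub)
  refine ⟨U ∩ ⋃ m, Xs m, hmem, fun n y hy z hz => ?_⟩
  by_contra hyz
  have hc := hk y hy.1.1 z hz.1.1 hyz
  rw [key] at hc
  have : (∃ p, dist y z ∈ distSet (Xs p) (Xs p)) := ⟨n, y, hy.2, z, hz.2, rfl⟩
  simp [hχ, this] at hc
end

section
/- Let (X,d) be an infinite metric space and let {X_n : n ∈ ω} be a family of nonempty pairwise disjoint subsets of X such that d(X_i, X_j) ∩ d(X_n, X_n) = ∅ for all n and all distinct i, j, and moreover d(X_i, X_j) ∩ d(X_k, X_l) = ∅ for all distinct pairs {i,j}, {k,l} ∈ [ω]². Let 𝒰 be a metrically Ramsey ultrafilter on X such that ⋃_{n<ω} X_n ∈ 𝒰 and X_n ∉ 𝒰 for each n < ω. Then there exists a mapping φ : X → ω such that the image ultrafilter φ(𝒰) is a Ramsey (selective) ultrafilter on ω. -/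
/-- A free ultrafilter on `ℕ` is Ramsey (selective) if every symmetric
`{0,1}`-coloring of pairs has a monochrome member. -/
def IsRamseyUltrafilter (𝒱 : Ultrafilter ℕ) : Prop :=
  (∀ n : ℕ, 𝒱 ≠ pure n) ∧
  ∀ χ : ℕ → ℕ → Bool, (∀ a b, χ a b = χ b a) →
    ∃ V ∈ 𝒱, ∃ k : Bool, ∀ x ∈ V, ∀ y ∈ V, x ≠ y → χ x y = k

/-- Proposition 1.6(ii): if moreover distinct pairs of pieces have disjoint
cross-distance sets, then some map `φ : X → ω` pushes `𝒰` to a Ramsey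
(selective) ultrafilter on `ω`. -/
theorem stmt8 {X : Type*} [MetricSpace X] [Infinite X] (Xs : ℕ → Set X)
    (hne : ∀ n, (Xs n).Nonempty)
    (hdisj : ∀ i j, i ≠ j → Disjoint (Xs i) (Xs j))
    (hdist : ∀ n i j, i ≠ j → distSet (Xs i) (Xs j) ∩ distSet (Xs n) (Xs n) = ∅)
    (hdist2 : ∀ i j k l, i ≠ j → k ≠ l → ({i, j} : Set ℕ) ≠ {k, l} →
      distSet (Xs i) (Xs j) ∩ distSet (Xs k) (Xs l) = ∅)
    (𝒰 : Ultrafilter X) (hfree : IsFreeUltrafilter 𝒰)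
    (hMR : MetricallyRamsey 𝒰)
    (hunion : (⋃ n, Xs n) ∈ 𝒰) (hnot : ∀ n, Xs n ∉ 𝒰) :
    ∃ φ : X → ℕ, IsRamseyUltrafilter (Ultrafilter.map φ 𝒰) := by
  classical
  have pair_cases : ∀ a b c d : ℕ, a ≠ b → ({a, b} : Set ℕ) = {c, d} →
      (a = c ∧ b = d) ∨ (a = d ∧ b = c) := by
    intro a b c d hab h
    have ha : a ∈ ({c, d} : Set ℕ) := h ▸ (by simp)
    have hb : b ∈ ({c, d} : Set ℕ) := h ▸ (by simp)
    simp only [Set.mem_insert_iff, Set.mem_singleton_iff] at ha hb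
    rcases ha with rfl | rfl <;> rcases hb with h1 | h1 <;> simp_all
  set φ : X → ℕ := fun x => if h : ∃ n, x ∈ Xs n then h.choose else 0 with hφdef
  have hφmem : ∀ {n : ℕ} {x : X}, x ∈ Xs n → φ x = n := by
    intro n x hx
    have h : ∃ m, x ∈ Xs m := ⟨n, hx⟩
    have hm := h.choose_spec
    simp only [hφdef, dif_pos h]
    by_contra hne'
    exact Set.disjoint_left.mp (hdisj _ _ hne') hm hx
  refine ⟨φ, ?_, ?_⟩
  · -- freeness
    intro n hn
    have h1 : φ ⁻¹' {n} ∈ 𝒰 := by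
      have : ({n} : Set ℕ) ∈ Ultrafilter.map φ 𝒰 := by rw [hn]; simp
      exact this
    have h2 : φ ⁻¹' {n} ∩ ⋃ m, Xs m ∈ 𝒰 := Filter.inter_mem h1 hunion
    have h3 : φ ⁻¹' {n} ∩ ⋃ m, Xs m ⊆ Xs n := by
      rintro x ⟨hx1, hx2⟩
      obtain ⟨m, hm⟩ := Set.mem_iUnion.mp hx2
      have hmn : φ x = m := hφmem hm
      have : m = n := by rw [← hmn]; exact hx1
      rwa [← this]
    exact hnot n (Filter.mem_of_superset h2 h3)
  · -- Ramsey
    intro χ hsym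
    set P : ℝ → Prop := fun r => ∃ p : ℕ × ℕ, p.1 ≠ p.2 ∧ r ∈ distSet (Xs p.1) (Xs p.2)
      with hPdef
    set g : ℝ → Bool := fun r => if h : P r then χ h.choose.1 h.choose.2 else false
      with hgdef
    have hg : ∀ i j r, i ≠ j → r ∈ distSet (Xs i) (Xs j) → g r = χ i j := by
      intro i j r hij hr
      have h : P r := ⟨(i, j), hij, hr⟩
      have hspec := h.choose_spec
      simp only [hgdef, dif_pos h]
      by_cases hset : ({h.choose.1, h.choose.2} : Set ℕ) = {i, j}
      · rcases pair_cases _ _ _ _ hspec.1 hset with ⟨e1, e2⟩ | ⟨e1, e2⟩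
        · rw [e1, e2]
        · rw [e1, e2, hsym]
      · exfalso
        have hemp := hdist2 h.choose.1 h.choose.2 i j hspec.1 hij hset
        have : r ∈ distSet (Xs h.choose.1) (Xs h.choose.2) ∩ distSet (Xs i) (Xs j) :=
          ⟨hspec.2, hr⟩
        rw [hemp] at this
        exact this
    have hiso : IsIsometricColoring (fun x y : X => g (dist x y)) := by
      intro x y z t h
      simp only [h]
    obtain ⟨U, hU, k, hk⟩ := hMR _ hiso
    refine ⟨φ '' (U ∩ ⋃ n, Xs n), ?_, k, ?_⟩
    · have hsub : U ∩ ⋃ n, Xs n ⊆ φ ⁻¹' (φ '' (U ∩ ⋃ n, Xs n)) := fun x hx => ⟨x, hx, rfl⟩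
      exact Ultrafilter.mem_map.mpr
        (Filter.mem_of_superset (Filter.inter_mem hU hunion) hsub)
    · rintro m ⟨x, ⟨hxU, hxu⟩, rfl⟩ n ⟨y, ⟨hyU, hyu⟩, rfl⟩ hmn
      obtain ⟨i, hxi⟩ := Set.mem_iUnion.mp hxu
      obtain ⟨j, hyj⟩ := Set.mem_iUnion.mp hyu
      have hφx : φ x = i := hφmem hxi
      have hφy : φ y = j := hφmem hyj
      have hij : i ≠ j := by rwa [hφx, hφy] at hmn
      have hxy : x ≠ y := fun he => Set.disjoint_left.mp (hdisj i j hij) hxi (he ▸ hyj)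
      have hd : dist x y ∈ distSet (Xs i) (Xs j) := ⟨x, hxi, y, hyj, rfl⟩
      have hkk := hk x hxU y hyU hxy
      rw [hφx, hφy, ← hg i j (dist x y) hij hd]
      exact hkk
end

section
/- Let (X,d) be an infinite metric space and let {X_n : n ∈ ω} be a family of nonempty pairwise disjoint subsets of X such that d(X_i, X_j) ∩ d(X_n, X_n) = ∅ for all n and all distinct i, j. If for each n < ω there exists m < ω with m > n and |X_m| > n, then there exists a free ultrafilter 𝒱 on X such that ⋃_{n<ω} X_n ∈ 𝒱 and 𝒱 is not metrically Ramsey. -/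
universe u

/-- Proposition 1.6(iii): if the pieces have unbounded sizes, there is a free
ultrafilter containing the union which is not metrically Ramsey. -/
theorem stmt9 {X : Type u} [MetricSpace X] [Infinite X] (Xs : ℕ → Set X)
    (hne : ∀ n, (Xs n).Nonempty)
    (hdisj : ∀ i j, i ≠ j → Disjoint (Xs i) (Xs j))
    (hdist : ∀ n i j, i ≠ j → distSet (Xs i) (Xs j) ∩ distSet (Xs n) (Xs n) = ∅)
    (hbig : ∀ n : ℕ, ∃ m : ℕ, n < m ∧ (n : Cardinal.{u}) < Cardinal.mk (Xs m)) :
    ∃ 𝒱 : Ultrafilter X, IsFreeUltrafilter 𝒱 ∧ (⋃ n, Xs n) ∈ 𝒱 ∧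
      ¬ MetricallyRamsey 𝒱 := by
  classical
  set Y : Set X := ⋃ n, Xs n with hY
  let Bad : Set X → Prop := fun V => ∃ k : ℕ, ∃ S : Finset ℕ,
    ∀ m : ℕ, m ∉ S → Cardinal.mk ↥(V ∩ Xs m) ≤ (k : Cardinal.{u})
  have bad_empty : Bad ∅ := ⟨0, ∅, fun m _ => by simp⟩
  have bad_union : ∀ V W, Bad V → Bad W → Bad (V ∪ W) := by
    rintro V W ⟨k1, S1, h1⟩ ⟨k2, S2, h2⟩
    refine ⟨k1 + k2, S1 ∪ S2, fun m hm => ?_⟩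
    have hm1 : m ∉ S1 := fun h => hm (Finset.mem_union_left _ h)
    have hm2 : m ∉ S2 := fun h => hm (Finset.mem_union_right _ h)
    have hset : (V ∪ W) ∩ Xs m = (V ∩ Xs m) ∪ (W ∩ Xs m) :=
      Set.union_inter_distrib_right _ _ _
    rw [hset]
    calc Cardinal.mk ↥((V ∩ Xs m) ∪ (W ∩ Xs m))
        ≤ Cardinal.mk ↥(V ∩ Xs m) + Cardinal.mk ↥(W ∩ Xs m) := Cardinal.mk_union_le _ _
      _ ≤ (k1 : Cardinal.{u}) + (k2 : Cardinal.{u}) := add_le_add (h1 m hm1) (h2 m hm2)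
      _ = ((k1 + k2 : ℕ) : Cardinal.{u}) := by push_cast; ring
  have bad_nonempty : ∀ V, Bad V → (Y \ V).Nonempty := by
    rintro V ⟨k, S, hV⟩
    obtain ⟨m, hmn, hcard⟩ := hbig (max k (S.sup id))
    have hmS : m ∉ S := by
      intro h
      have : m ≤ max k (S.sup id) := le_trans (Finset.le_sup (f := id) h) (le_max_right _ _)
      omega
    have hle : Cardinal.mk ↥(V ∩ Xs m) < Cardinal.mk ↥(Xs m) :=
      lt_of_le_of_lt (le_trans (hV m hmS) (by exact_mod_cast Nat.cast_le.mpr (le_max_left k (S.sup id)))) hcard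
    have hsub : ¬ (Xs m ⊆ V) := by
      intro hsub
      have h' : V ∩ Xs m = Xs m := Set.inter_eq_self_of_subset_right hsub
      rw [h'] at hle
      exact lt_irrefl _ hle
    obtain ⟨x, hx, hxV⟩ := Set.not_subset.mp hsub
    exact ⟨x, Set.mem_iUnion.mpr ⟨m, hx⟩, hxV⟩
  let F : Filter X :=
    { sets := {W | ∃ V, Bad V ∧ Y \ V ⊆ W}
      univ_sets := ⟨∅, bad_empty, Set.subset_univ _⟩
      sets_of_superset := fun ⟨V, hV, hsub⟩ h => ⟨V, hV, hsub.trans h⟩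
      inter_sets := fun ⟨V1, hV1, h1⟩ ⟨V2, hV2, h2⟩ =>
        ⟨V1 ∪ V2, bad_union _ _ hV1 hV2, fun x hx =>
          ⟨h1 ⟨hx.1, fun h => hx.2 (Or.inl h)⟩, h2 ⟨hx.1, fun h => hx.2 (Or.inr h)⟩⟩⟩ }
  have memF : ∀ V, Bad V → Y \ V ∈ F := fun V hV => ⟨V, hV, le_refl _⟩
  have hFne : F.NeBot := by
    constructor
    intro h
    have h0 : (∅ : Set X) ∈ F := h ▸ Filter.mem_bot
    obtain ⟨V, hV, hsub⟩ := h0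
    obtain ⟨x, hx⟩ := bad_nonempty V hV
    exact hsub hx
  obtain ⟨𝒱, h𝒱⟩ := Ultrafilter.exists_le F
  have hgood : ∀ U : Set X, U ∈ 𝒱 → ¬ Bad U := by
    intro U hU hbad
    have hYU : Y \ U ∈ 𝒱 := h𝒱 (memF U hbad)
    have h2 : U ∩ (Y \ U) ∈ 𝒱 := Filter.inter_mem hU hYU
    have he : U ∩ (Y \ U) = ∅ := by
      ext x; simp only [Set.mem_inter_iff, Set.mem_diff, Set.mem_empty_iff_false, iff_false]
      tauto
    rw [he] at h2
    exact (Filter.empty_notMem (𝒱 : Filter X)) h2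
  have key : ∀ U : Set X, U ∈ 𝒱 → ∀ (k : ℕ) (S : Finset ℕ),
      ∃ m, m ∉ S ∧ (k : Cardinal.{u}) < Cardinal.mk ↥(U ∩ Xs m) := by
    intro U hU k S
    by_contra h
    push_neg at h
    exact hgood U hU ⟨k, S, fun m hm => h m hm⟩
  refine ⟨𝒱, ?_, ?_, ?_⟩
  · intro x hx
    have hbad : Bad {x} := by
      refine ⟨1, ∅, fun m _ => ?_⟩
      calc Cardinal.mk ↥({x} ∩ Xs m) ≤ Cardinal.mk ↥({x} : Set X) :=
            Cardinal.mk_le_mk_of_subset Set.inter_subset_left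
        _ = 1 := Cardinal.mk_singleton x
        _ = ((1 : ℕ) : Cardinal.{u}) := by norm_cast
    have hxmem : {x} ∈ 𝒱 := by rw [hx]; exact Ultrafilter.mem_pure.mpr rfl
    exact hgood {x} hxmem hbad
  · exact h𝒱 (by simpa using memF ∅ bad_empty)
  · intro hMR
    let Sd : Set ℝ := ⋃ n, distSet (Xs n) (Xs n)
    let χ : X → X → Bool := fun x y => decide (dist x y ∈ Sd)
    have hiso : IsIsometricColoring χ := by
      intro x y z t h
      simp only [χ, h]
    obtain ⟨U, hU, c, hmono⟩ := hMR χ hiso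
    obtain ⟨m1, _, h1⟩ := key U hU 1 ∅
    have hnt : Nontrivial ↥(U ∩ Xs m1) := by
      rw [← Cardinal.one_lt_iff_nontrivial]
      exact_mod_cast h1
    obtain ⟨⟨x, hx⟩, ⟨y, hy⟩, hxy⟩ := hnt
    have hxy' : x ≠ y := fun h => hxy (Subtype.ext h)
    obtain ⟨m2, hm2, h2⟩ := key U hU 0 {m1}
    have hm2' : m2 ≠ m1 := by simpa using hm2
    have hne2 : Nonempty ↥(U ∩ Xs m2) := by
      rw [← Cardinal.mk_ne_zero_iff]
      intro h0
      rw [h0] at h2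
      exact absurd h2 (by simp)
    obtain ⟨⟨z, hz⟩⟩ := hne2
    have hxz : x ≠ z := by
      intro h
      exact Set.disjoint_left.mp (hdisj m1 m2 (Ne.symm hm2')) hx.2 (h ▸ hz.2)
    have hχxy : χ x y = true := by
      simp only [χ, decide_eq_true_eq]
      exact Set.mem_iUnion.mpr ⟨m1, ⟨x, hx.2, y, hy.2, rfl⟩⟩
    have hχxz : χ x z = false := by
      simp only [χ, decide_eq_false_iff_not]
      intro hmem
      obtain ⟨s, ⟨n, rfl⟩, hs⟩ := hmem
      have : dist x z ∈ distSet (Xs m1) (Xs m2) := ⟨x, hx.2, z, hz.2, rfl⟩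
      exact Set.eq_empty_iff_forall_notMem.mp (hdist n m1 m2 (Ne.symm hm2')) _ ⟨this, hs⟩
    have e1 := hmono x hx.1 y hy.1 hxy'
    have e2 := hmono x hx.1 z hz.1 hxz
    rw [hχxy] at e1
    rw [hχxz] at e2
    rw [← e1] at e2
    simp at e2
end

section
/- For every infinite ultrametric space (X,d) there exists a countably infinite subset Y of X such that every free ultrafilter 𝒰 on X with Y ∈ 𝒰 is metrically Ramsey. -/
section Aux

variable {X : Type*} [MetricSpace X]

/-- Ultrametric isosceles: if `dist a x < dist a y` then `dist x y = dist a y`. -/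
lemma ultra_isosceles (hultra : ∀ x y z : X, dist x z ≤ max (dist x y) (dist y z))
    {a x y : X} (h : dist a x < dist a y) : dist x y = dist a y := by
  have h1 : dist x y ≤ dist a y := by
    have := hultra x a y
    rwa [dist_comm x a, max_eq_right h.le] at this
  have h2 : dist a y ≤ dist x y := by
    by_contra hc
    push_neg at hc
    have h3 : dist a y ≤ max (dist a x) (dist x y) := hultra a x y
    exact absurd h3 (not_le.mpr (max_lt h hc))
  linarith

/-- Splitting step in the "all distance sets finite" case. -/
lemma ultra_step (hfin : ∀ a : X, (Set.range (dist a)).Finite)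
    (S : Set X) (hS : S.Infinite) :
    ∃ (a : X) (T : Set X), a ∈ S ∧ T ⊆ S ∧ a ∉ T ∧ T.Infinite ∧
      ∀ x ∈ T, ∀ x' ∈ T, dist a x = dist a x' := by
  obtain ⟨a, ha⟩ := hS.nonempty
  have hS' : (S \ {a}).Infinite := hS.diff (Set.finite_singleton a)
  have hfib : ∃ r, ((S \ {a}) ∩ {x | dist a x = r}).Infinite := by
    by_contra hc
    push_neg at hc
    have hsub : S \ {a} ⊆ ⋃ r ∈ Set.range (dist a), ((S \ {a}) ∩ {x | dist a x = r}) := by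
      intro x hx
      exact Set.mem_biUnion ⟨x, rfl⟩ ⟨hx, rfl⟩
    have hfin2 : (⋃ r ∈ Set.range (dist a), ((S \ {a}) ∩ {x | dist a x = r})).Finite :=
      (hfin a).biUnion (fun r _ => hc r)
    exact hS' (hfin2.subset hsub)
  obtain ⟨r, hr⟩ := hfib
  refine ⟨a, (S \ {a}) ∩ {x | dist a x = r}, ha,
    Set.inter_subset_left.trans Set.diff_subset, fun h => h.1.2 rfl, hr, ?_⟩
  intro x hx x' hx'
  rw [hx.2, hx'.2]

/-- Key lemma: there is an injective sequence such that for every isometric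
coloring, the color of a pair is determined by one of its two indices. -/
lemma exists_good_seq [Infinite X]
    (hultra : ∀ x y z : X, dist x z ≤ max (dist x y) (dist y z)) :
    ∃ y : ℕ → X, Function.Injective y ∧
      ∀ χ : X → X → Bool, IsIsometricColoring χ →
        ∃ f : ℕ → Bool, ∀ i j, i ≠ j →
          χ (y i) (y j) = f i ∨ χ (y i) (y j) = f j := by
  by_cases hfin : ∀ a : X, (Set.range (dist a)).Finite
  · -- comb construction
    choose sa sT h1 h2 h3 h4 h5 using
      fun (p : {S : Set X // S.Infinite}) => ultra_step hfin p.1 p.2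
    let F : ℕ → {S : Set X // S.Infinite} := fun n =>
      Nat.rec ⟨Set.univ, Set.infinite_univ⟩ (fun _ p => ⟨sT p, h4 p⟩) n
    set y : ℕ → X := fun n => sa (F n) with hy
    have hFsucc : ∀ n, (F (n + 1)).1 = sT (F n) := fun n => rfl
    have hmem : ∀ n, y n ∈ (F n).1 := fun n => h1 (F n)
    have hsub : ∀ n, (F (n + 1)).1 ⊆ (F n).1 := fun n => h2 (F n)
    have hnot : ∀ n, y n ∉ (F (n + 1)).1 := fun n => h3 (F n)
    have hconst : ∀ n, ∀ x ∈ (F (n + 1)).1, ∀ x' ∈ (F (n + 1)).1,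
        dist (y n) x = dist (y n) x' := fun n => h5 (F n)
    have hchain : ∀ n k, (F (n + k)).1 ⊆ (F n).1 := by
      intro n k
      induction k with
      | zero => exact fun x hx => hx
      | succ k ih => exact fun x hx => ih (hsub (n + k) hx)
    have hmem' : ∀ n m, n < m → y m ∈ (F (n + 1)).1 := by
      intro n m hnm
      obtain ⟨k, rfl⟩ := Nat.exists_eq_add_of_le hnm
      exact hchain (n + 1) k (hmem _)
    have hne : ∀ n m, n < m → y n ≠ y m := by
      intro n m hnm he
      exact hnot n (he ▸ hmem' n m hnm)
    have hinj : Function.Injective y := by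
      intro n m he
      rcases lt_trichotomy n m with h | h | h
      · exact absurd he (hne n m h)
      · exact h
      · exact absurd he.symm (hne m n h)
    have hdist : ∀ n m, n < m → dist (y n) (y m) = dist (y n) (y (n + 1)) :=
      fun n m hnm => hconst n _ (hmem' n m hnm) _ (hmem (n + 1))
    refine ⟨y, hinj, fun χ hχ => ⟨fun n => χ (y n) (y (n + 1)), ?_⟩⟩
    intro i j hij
    rcases lt_or_gt_of_ne hij with h | h
    · exact Or.inl (hχ _ _ _ _ (hdist i j h))
    · refine Or.inr (hχ _ _ _ _ ?_)
      rw [dist_comm]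
      exact hdist j i h
  · -- some point has infinitely many distances
    push_neg at hfin
    obtain ⟨a, hinfr⟩ := hfin
    have hS : (Set.range (dist a) \ {0}).Infinite :=
      Set.Infinite.diff hinfr (Set.finite_singleton 0)
    let e := hS.natEmbedding
    have hchoose : ∀ n : ℕ, ∃ x : X, dist a x = (e n : ℝ) := fun n => (e n).2.1
    choose z hz using hchoose
    have hzne : ∀ i j, i ≠ j → dist a (z i) ≠ dist a (z j) := by
      intro i j hij he
      apply hij
      have : (e i : ℝ) = (e j : ℝ) := by rw [← hz i, ← hz j]; exact he
      exact e.injective (Subtype.ext this)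
    have hinj : Function.Injective z := by
      intro i j he
      by_contra hij
      exact hzne i j hij (by rw [he])
    refine ⟨z, hinj, fun χ hχ => ⟨fun n => χ a (z n), ?_⟩⟩
    intro i j hij
    rcases (hzne i j hij).lt_or_gt with h | h
    · exact Or.inr (hχ _ _ _ _ (ultra_isosceles hultra h))
    · refine Or.inl (hχ _ _ _ _ ?_)
      rw [dist_comm]
      exact ultra_isosceles hultra h

end Aux

/-- Proposition 2.1: every infinite ultrametric space has a countably infinite
subset `Y` such that every free ultrafilter containing `Y` is metrically
Ramsey. -/
theorem stmt11 {X : Type*} [MetricSpace X] [Infinite X]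
    (hultra : ∀ x y z : X, dist x z ≤ max (dist x y) (dist y z)) :
    ∃ Y : Set X, Y.Countable ∧ Y.Infinite ∧
      ∀ 𝒰 : Ultrafilter X, IsFreeUltrafilter 𝒰 → Y ∈ 𝒰 →
        MetricallyRamsey 𝒰 := by
  obtain ⟨y, hy, hkey⟩ := exists_good_seq hultra
  refine ⟨Set.range y, Set.countable_range y, Set.infinite_range_of_injective hy, ?_⟩
  intro 𝒰 _ hY χ hχ
  obtain ⟨f, hf⟩ := hkey χ hχ
  have hcover : Set.range y ⊆ (y '' {n | f n = true}) ∪ (y '' {n | f n = false}) := by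
    rintro _ ⟨n, rfl⟩
    cases h : f n
    · exact Or.inr ⟨n, h, rfl⟩
    · exact Or.inl ⟨n, h, rfl⟩
  have hmem : (y '' {n | f n = true}) ∪ (y '' {n | f n = false}) ∈ 𝒰 :=
    Filter.mem_of_superset hY hcover
  have hmono : ∀ k : Bool, MonochromeOn χ (y '' {n | f n = k}) := by
    intro k
    refine ⟨k, ?_⟩
    rintro _ ⟨i, hi, rfl⟩ _ ⟨j, hj, rfl⟩ hne
    have hij : i ≠ j := fun h => hne (by rw [h])
    rcases hf i j hij with h | h
    · rw [h]; exact hi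
    · rw [h]; exact hj
  rcases Ultrafilter.union_mem_iff.mp hmem with h | h
  · exact ⟨_, h, hmono true⟩
  · exact ⟨_, h, hmono false⟩
end

section
/- For a free ultrafilter 𝒰 on an infinite set X, the following are equivalent: (i) 𝒰 is selective; (ii) for every ultrametric d on X with scale d(X,X) = {0,1,2}, the ultrafilter 𝒰 is metrically Ramsey on (X,d). -/
/-- `d` is an ultrametric on `X`. -/
def IsUltrametric {X : Type*} (d : X → X → ℝ) : Prop :=
  (∀ x y : X, d x y = 0 ↔ x = y) ∧ (∀ x y : X, d x y = d y x) ∧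
  (∀ x y z : X, d x z ≤ max (d x y) (d y z))

/-- `𝒰` is metrically Ramsey with respect to the distance function `d`:
every coloring of pairs depending only on `d` has a monochrome member. -/
def MetricallyRamseyFor {X : Type*} (d : X → X → ℝ) (𝒰 : Ultrafilter X) : Prop :=
  ∀ χ : X → X → Bool, (∀ x y z t : X, d x y = d z t → χ x y = χ z t) →
    ∃ U ∈ 𝒰, ∃ k : Bool, ∀ x ∈ U, ∀ y ∈ U, x ≠ y → χ x y = k

/-- A free ultrafilter is selective if for every partition either a cell belongs
to it, or it has a member meeting every cell in at most one point. -/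
def IsSelective {X : Type*} (𝒰 : Ultrafilter X) : Prop :=
  ∀ Pp : Set (Set X), Setoid.IsPartition Pp →
    (∃ P ∈ Pp, P ∈ 𝒰) ∨ ∃ U ∈ 𝒰, ∀ P ∈ Pp, (U ∩ P).Subsingleton

open Classical in
/-- Proposition 2.2: a free ultrafilter on an infinite set is selective iff it is
metrically Ramsey for every ultrametric with scale `{0,1,2}`. -/
theorem stmt12 {X : Type*} [Infinite X] (𝒰 : Ultrafilter X)
    (hfree : IsFreeUltrafilter 𝒰) :
    IsSelective 𝒰 ↔
      ∀ d : X → X → ℝ, IsUltrametric d →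
        (Set.range fun p : X × X => d p.1 p.2) = {0, 1, 2} →
        MetricallyRamseyFor d 𝒰 := by
  constructor
  · -- selective → Ramsey
    rintro hsel d ⟨hd0, hdsymm, hdmax⟩ hrange χ hiso
    have hval : ∀ x y : X, d x y = 0 ∨ d x y = 1 ∨ d x y = 2 := by
      intro x y
      have : d x y ∈ ({0, 1, 2} : Set ℝ) := hrange ▸ ⟨(x, y), rfl⟩
      simpa using this
    -- witnesses for distances 1 and 2
    have h1 : ∃ p : X × X, d p.1 p.2 = 1 := by
      have : (1 : ℝ) ∈ (Set.range fun p : X × X => d p.1 p.2) := by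
        rw [hrange]; simp
      exact this
    have h2 : ∃ p : X × X, d p.1 p.2 = 2 := by
      have : (2 : ℝ) ∈ (Set.range fun p : X × X => d p.1 p.2) := by
        rw [hrange]; simp
      exact this
    obtain ⟨p1, hp1⟩ := h1
    obtain ⟨p2, hp2⟩ := h2
    set a := χ p1.1 p1.2 with ha
    set b := χ p2.1 p2.2 with hb
    have hχ1 : ∀ x y : X, d x y = 1 → χ x y = a := fun x y h =>
      hiso x y p1.1 p1.2 (h.trans hp1.symm)
    have hχ2 : ∀ x y : X, d x y = 2 → χ x y = b := fun x y h =>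
      hiso x y p2.1 p2.2 (h.trans hp2.symm)
    by_cases hab : a = b
    · refine ⟨Set.univ, 𝒰.univ_mem, a, fun x _ y _ hxy => ?_⟩
      rcases hval x y with h | h | h
      · exact absurd ((hd0 x y).mp h) hxy
      · exact hχ1 x y h
      · exact (hχ2 x y h).trans hab.symm
    · -- set up the equivalence relation d ≤ 1
      set r : Setoid X := ⟨fun x y => d x y ≤ 1, by
        constructor
        · intro x; rw [(hd0 x x).mpr rfl]; norm_num
        · intro x y h; rwa [hdsymm]
        · intro x y z hxy hyz
          exact le_trans (hdmax x y z) (max_le hxy hyz)⟩ with hr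
      rcases hsel r.classes (Setoid.isPartition_classes r) with ⟨P, hP, hPU⟩ | ⟨U, hU, hUP⟩
      · -- a ball belongs to 𝒰
        refine ⟨P, hPU, a, fun x hx y hy hxy => ?_⟩
        obtain ⟨z, hz⟩ := hP
        have hxz : r x z := by rw [hz] at hx; exact hx
        have hyz : r y z := by rw [hz] at hy; exact hy
        have hxy1 : d x y ≤ 1 := r.trans' hxz (r.symm' hyz)
        rcases hval x y with h | h | h
        · exact absurd ((hd0 x y).mp h) hxy
        · exact hχ1 x y h
        · rw [h] at hxy1; norm_num at hxy1
      · -- a transversal belongs to 𝒰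
        refine ⟨U, hU, b, fun x hx y hy hxy => ?_⟩
        rcases hval x y with h | h | h
        · exact absurd ((hd0 x y).mp h) hxy
        · -- x and y would be in the same class
          exfalso
          have hxy1 : d x y ≤ 1 := by rw [h]
          have hx' : x ∈ {z | r z y} := show d x y ≤ 1 from hxy1
          have hy' : y ∈ {z | r z y} := show d y y ≤ 1 by rw [(hd0 y y).mpr rfl]; norm_num
          exact hxy (hUP _ (r.mem_classes y) ⟨hx, hx'⟩ ⟨hy, hy'⟩)
        · exact hχ2 x y h
  · -- Ramsey → selective
    intro hram Pp hPp
    -- case: all cells subsingleton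
    by_cases hsing : ∀ P ∈ Pp, P.Subsingleton
    · exact Or.inr ⟨Set.univ, 𝒰.univ_mem, fun P hP =>
        (hsing P hP).anti (Set.inter_subset_right)⟩
    push_neg at hsing
    obtain ⟨P₀, hP₀, hP₀big⟩ := hsing
    replace hP₀big : P₀.Nontrivial := hP₀big
    obtain ⟨x₀, hx₀, y₀, hy₀, hxy₀⟩ := hP₀big
    have huniq : ∀ (a : X) (P Q : Set X), P ∈ Pp → Q ∈ Pp → a ∈ P → a ∈ Q → P = Q := by
      intro a P Q hP hQ haP haQ
      obtain ⟨R, _, hRu⟩ := hPp.2 a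
      rw [hRu P ⟨hP, haP⟩, hRu Q ⟨hQ, haQ⟩]
    -- case: only one cell
    by_cases h2 : ∃ Q ∈ Pp, Q ≠ P₀
    swap
    · push_neg at h2
      refine Or.inl ⟨P₀, hP₀, ?_⟩
      have : P₀ = Set.univ := by
        ext x
        simp only [Set.mem_univ, iff_true]
        obtain ⟨Q, ⟨hQ, hxQ⟩, _⟩ := hPp.2 x
        rwa [← h2 Q hQ]
      rw [this]; exact 𝒰.univ_mem
    obtain ⟨Q, hQ, hQne⟩ := h2
    obtain ⟨q, hq⟩ := Set.nonempty_iff_ne_empty.mpr (fun h => hPp.1 (h ▸ hQ))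
    -- the relation of being in the same cell
    set rel : X → X → Prop := fun x y => ∃ P ∈ Pp, x ∈ P ∧ y ∈ P with hreldef
    have hrelrefl : ∀ x, rel x x := by
      intro x
      obtain ⟨R, ⟨hR, hxR⟩, _⟩ := hPp.2 x
      exact ⟨R, hR, hxR, hxR⟩
    have hrelsymm : ∀ x y, rel x y → rel y x := by
      rintro x y ⟨R, hR, hx, hy⟩; exact ⟨R, hR, hy, hx⟩
    have hreltrans : ∀ x y z, rel x y → rel y z → rel x z := by
      rintro x y z ⟨R, hR, hx, hy⟩ ⟨S, hS, hy', hz⟩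
      exact ⟨R, hR, hx, huniq y R S hR hS hy hy' ▸ hz⟩
    set d : X → X → ℝ := fun x y => if x = y then 0 else if rel x y then 1 else 2
      with hddef
    have hd0 : ∀ x y, d x y = 0 ↔ x = y := by
      intro x y
      constructor
      · intro h
        by_contra hne
        simp only [hddef, if_neg hne] at h
        split at h <;> norm_num at h
      · intro h; simp [hddef, h]
    have hdsymm : ∀ x y, d x y = d y x := by
      intro x y
      by_cases hxy : x = y
      · rw [hxy]
      · simp only [hddef, if_neg hxy, if_neg (Ne.symm hxy)]
        by_cases hr : rel x y
        · rw [if_pos hr, if_pos (hrelsymm _ _ hr)]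
        · rw [if_neg hr, if_neg (fun h => hr (hrelsymm _ _ h))]
    have hdnonneg : ∀ x y, 0 ≤ d x y := by
      intro x y
      simp only [hddef]
      split
      · norm_num
      · split <;> norm_num
    have hdmax : ∀ x y z, d x z ≤ max (d x y) (d y z) := by
      intro x y z
      by_cases hxz : x = z
      · simp only [hddef, if_pos hxz]
        exact le_max_of_le_left (hdnonneg x y)
      by_cases hrxz : rel x z
      · -- d x z = 1; need max ≥ 1
        have hdxz : d x z = 1 := by simp [hddef, hxz, hrxz]
        by_cases hxy : x = y
        · subst hxy; exact le_max_right _ _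
        · rw [hdxz]
          refine le_max_of_le_left ?_
          simp only [hddef, if_neg hxy]
          split <;> norm_num
      · -- d x z = 2; need one of the two to be 2
        have hdxz : d x z = 2 := by simp [hddef, hxz, hrxz]
        rw [hdxz]
        by_cases hxy : x = y
        · subst hxy; rw [← hdxz]; exact le_max_right _ _
        by_cases hyz : y = z
        · subst hyz; rw [← hdxz]; exact le_max_left _ _
        by_cases hrxy : rel x y
        · have hryz : ¬ rel y z := fun h => hrxz (hreltrans _ _ _ hrxy h)
          refine le_max_of_le_right ?_
          simp [hddef, hyz, hryz]
        · refine le_max_of_le_left ?_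
          simp [hddef, hxy, hrxy]
    -- the scale is {0,1,2}
    have hrange : (Set.range fun p : X × X => d p.1 p.2) = {0, 1, 2} := by
      apply Set.Subset.antisymm
      · rintro v ⟨⟨x, y⟩, rfl⟩
        simp only [hddef]
        split
        · exact Or.inl rfl
        · split
          · exact Or.inr (Or.inl rfl)
          · exact Or.inr (Or.inr rfl)
      · have hx0q : ¬ rel x₀ q := by
          rintro ⟨R, hR, hx, hq'⟩
          exact hQne (huniq q Q R hQ hR hq hq' ▸ (huniq x₀ R P₀ hR hP₀ hx hx₀ : R = P₀))
        have hx0qne : x₀ ≠ q := fun h => hx0q ⟨P₀, hP₀, hx₀, h ▸ hx₀⟩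
        rintro v (rfl | rfl | rfl)
        · exact ⟨(x₀, x₀), by simp [hddef]⟩
        · exact ⟨(x₀, y₀), by simp [hddef, hxy₀, hreldef]; exact ⟨P₀, hP₀, hx₀, hy₀⟩⟩
        · exact ⟨(x₀, q), by simp [hddef, hx0qne, hx0q]⟩
    obtain ⟨U, hU, k, hk⟩ := hram d ⟨hd0, hdsymm, hdmax⟩ hrange
      (fun x y => decide (d x y = 2)) (fun x y z t h => by simp only [h])
    cases k with
    | true =>
      refine Or.inr ⟨U, hU, fun P hP x hx y hy => ?_⟩
      by_contra hxy
      have := hk x hx.1 y hy.1 hxy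
      simp only [decide_eq_true_eq] at this
      have : ¬ rel x y := by
        intro hr
        simp [hddef, hxy, hr] at this
      exact this ⟨P, hP, hx.2, hy.2⟩
    | false =>
      obtain ⟨x, hx⟩ := 𝒰.nonempty_of_mem hU
      obtain ⟨P, ⟨hP, hxP⟩, _⟩ := hPp.2 x
      refine Or.inl ⟨P, hP, 𝒰.mem_of_superset hU ?_⟩
      intro y hy
      by_cases hxy : x = y
      · exact hxy ▸ hxP
      · have := hk x hx y hy hxy
        simp only [decide_eq_false_iff_not] at this
        have hr : rel x y := by
          by_contra hr
          exact this (by simp [hddef, hxy, hr])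
        obtain ⟨R, hR, hxR, hyR⟩ := hr
        exact huniq x R P hR hP hxR hxP ▸ hyR
end

section
/- Let (X,d) be an infinite ultrametric space with finite scale d(X,X) = {0, r_1, …, r_n}, 0 < r_1 < … < r_n. The following are equivalent: (i) every free ultrafilter on (X,d) is metrically Ramsey; (ii) for every i ∈ {1,…,n}, the partition 𝒫_i of X into equivalence classes of the relation x ∼ y ⇔ d(x,y) ≤ r_i has only finitely many infinite classes, and there exists m ∈ ω such that |C| < m for each finite class C of 𝒫_i. -/
/-- The class of `x` under the equivalence `y ∼ z ↔ dist y z ≤ r`. -/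
def ballClass {X : Type*} [MetricSpace X] (r : ℝ) (x : X) : Set X :=
  {y : X | dist x y ≤ r}

section aux
variable {X : Type*} [MetricSpace X]

/-- transitivity of `dist ≤ R` in an ultrametric space -/
lemma pf13_trans (hultra : ∀ x y z : X, dist x z ≤ max (dist x y) (dist y z))
    {R : ℝ} {x y z : X} (h1 : dist x y ≤ R) (h2 : dist y z ≤ R) : dist x z ≤ R :=
  (hultra x y z).trans (max_le h1 h2)

lemma pf13_mem_self {R : ℝ} (hR : 0 ≤ R) (x : X) : x ∈ ballClass R x := by
  simp [ballClass, hR]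

lemma pf13_mem_iff {R : ℝ} {x y : X} : y ∈ ballClass R x ↔ dist x y ≤ R := Iff.rfl

lemma pf13_class_eq (hultra : ∀ x y z : X, dist x z ≤ max (dist x y) (dist y z))
    {R : ℝ} {x y : X} (h : dist x y ≤ R) : ballClass R x = ballClass R y := by
  ext z
  simp only [pf13_mem_iff]
  constructor
  · intro hz
    exact pf13_trans hultra (by rwa [dist_comm]) hz
  · intro hz
    exact pf13_trans hultra h hz

/-- two members of a class are close -/
lemma pf13_pair (hultra : ∀ x y z : X, dist x z ≤ max (dist x y) (dist y z))
    {R : ℝ} {x y z : X} (hy : y ∈ ballClass R x) (hz : z ∈ ballClass R x) :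
    dist y z ≤ R :=
  pf13_trans hultra (by rw [dist_comm]; exact hy) hz

/-- overlapping classes are equal -/
lemma pf13_class_eq_of_overlap (hultra : ∀ x y z : X, dist x z ≤ max (dist x y) (dist y z))
    {R : ℝ} {x y : X} (h : (ballClass R x ∩ ballClass R y).Nonempty) :
    ballClass R x = ballClass R y := by
  obtain ⟨z, hzx, hzy⟩ := h
  have : dist x y ≤ R := pf13_trans hultra hzx (by rwa [dist_comm])
  exact pf13_class_eq hultra this

lemma pf13_ncard_biUnion_le {α ι : Type*} (T : Finset ι) (f : ι → Set α) :
    (⋃ s ∈ T, f s).ncard ≤ ∑ s ∈ T, (f s).ncard := by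
  classical
  induction T using Finset.induction with
  | empty => simp
  | insert h ih =>
      rename_i a T'
      rw [Finset.set_biUnion_insert, Finset.sum_insert a]
      exact le_trans (Set.ncard_union_le _ _) (by omega)

/-- a set with all pairwise distances equal is monochrome -/
lemma pf13_mono_of_const (χ : X → X → Bool) (hχ : IsIsometricColoring χ)
    {U : Set X} {c : ℝ} (h : ∀ x ∈ U, ∀ y ∈ U, x ≠ y → dist x y = c) :
    MonochromeOn χ U := by
  by_cases hp : ∃ a ∈ U, ∃ b ∈ U, a ≠ b
  · obtain ⟨a, ha, b, hb, hab⟩ := hp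
    refine ⟨χ a b, fun x hx y hy hxy => ?_⟩
    exact hχ x y a b (by rw [h x hx y hy hxy, h a ha b hb hab])
  · push_neg at hp
    exact ⟨true, fun x hx y hy hxy => absurd (hp x hx y hy) (by simpa using hxy)⟩

end aux

/-- Proposition 2.3: for an infinite ultrametric space with finite scale
`{0, r 0, …, r (n-1)}`, `0 < r 0 < … < r (n-1)`, every free ultrafilter is
metrically Ramsey iff for each `i` the partition into classes of
`r i`-equivalence has only finitely many infinite classes and the finite
classes have uniformly bounded size. -/
theorem stmt13 {X : Type*} [MetricSpace X] [Infinite X]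
    (hultra : ∀ x y z : X, dist x z ≤ max (dist x y) (dist y z))
    (n : ℕ) (r : Fin n → ℝ) (hmono : StrictMono r) (hpos : ∀ i, 0 < r i)
    (hscale : (Set.range fun p : X × X => dist p.1 p.2) =
      insert 0 (Set.range r)) :
    (∀ 𝒰 : Ultrafilter X, IsFreeUltrafilter 𝒰 → MetricallyRamsey 𝒰) ↔
      ∀ i : Fin n,
        {C : Set X | (∃ x : X, C = ballClass (r i) x) ∧ C.Infinite}.Finite ∧
        ∃ m : ℕ, ∀ C : Set X, (∃ x : X, C = ballClass (r i) x) → C.Finite →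
          C.ncard < m := by
  classical
  have hscale' : ∀ x y : X, dist x y = 0 ∨ ∃ j, r j = dist x y := by
    intro x y
    have hmem : dist x y ∈ insert (0:ℝ) (Set.range r) := by
      rw [← hscale]; exact ⟨(x, y), rfl⟩
    simpa using hmem
  constructor
  · -- forward: Ramsey → condition
    intro hRam i
    by_contra hcon
    set R := r i with hR
    have hRpos : 0 < R := hpos i
    have hstar : ∀ k : ℕ,
        {C : Set X | (∃ x : X, C = ballClass R x) ∧ (C.Infinite ∨ k < C.ncard)}.Infinite := by
      intro k
      rw [not_and_or] at hcon
      rcases hcon with hA | hB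
      · exact Set.Infinite.mono (fun C hC => ⟨hC.1, Or.inl hC.2⟩) hA
      · push_neg at hB
        intro hfin
        set M := hfin.toFinset.sup Set.ncard with hM
        obtain ⟨C, hCc, hCf, hCn⟩ := hB (max k M + 1)
        have hCmem : C ∈ {C : Set X | (∃ x : X, C = ballClass R x) ∧ (C.Infinite ∨ k < C.ncard)} :=
          ⟨hCc, Or.inr (by omega)⟩
        have hle : C.ncard ≤ M := Finset.le_sup (hfin.mem_toFinset.2 hCmem)
        omega
    set G : Set (Set X) :=
      {s | (∀ x ∈ sᶜ, ∀ y ∈ sᶜ, dist x y ≤ R → x = y) ∨ (∃ x, sᶜ = ballClass R x) ∨ sᶜ.Finite}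
      with hG
    have hFIP : ∀ t ⊆ G, t.Finite → (⋂₀ t).Nonempty := by
      intro t htG htf
      set T := htf.toFinset with hT
      set k : ℕ := ∑ s ∈ T, (sᶜ.ncard + 1) with hk
      obtain ⟨C, hCmem, hCnew⟩ := ((hstar k).diff (htf.image compl)).nonempty
      obtain ⟨⟨x0, hCx0⟩, hCbig⟩ := hCmem
      have hCpair : ∀ y ∈ C, ∀ z ∈ C, dist y z ≤ R := by
        intro y hy z hz; rw [hCx0] at hy hz; exact pf13_pair hultra hy hz
      have hEbound : ∀ s ∈ T, (C ∩ sᶜ).Finite ∧ (C ∩ sᶜ).ncard ≤ sᶜ.ncard + 1 := by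
        intro s hs
        rcases htG (htf.mem_toFinset.1 hs) with hsel | ⟨x1, hclass⟩ | hfin
        · have hss : (C ∩ sᶜ).Finite ∧ (C ∩ sᶜ).ncard ≤ 1 := by
            have hsub : ∀ a ∈ C ∩ sᶜ, ∀ b ∈ C ∩ sᶜ, a = b := by
              intro a ha b hb
              exact hsel a ha.2 b hb.2 (hCpair a ha.1 b hb.1)
            have hfin' : (C ∩ sᶜ).Finite := Set.Subsingleton.finite (fun a ha b hb => hsub a ha b hb)
            exact ⟨hfin', (Set.ncard_le_one hfin').2 hsub⟩
          exact ⟨hss.1, hss.2.trans (by omega)⟩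
        · have hne : sᶜ ≠ C := by
            intro h
            exact hCnew ⟨s, htf.mem_toFinset.1 hs, h⟩
          have : C ∩ sᶜ = ∅ := by
            by_contra hne0
            have hne' : (C ∩ sᶜ).Nonempty := Set.nonempty_iff_ne_empty.2 hne0
            apply hne
            rw [hclass, hCx0] at hne' ⊢
            exact pf13_class_eq_of_overlap hultra ⟨hne'.some, hne'.some_mem.2, hne'.some_mem.1⟩
          simp [this]
        · exact ⟨hfin.subset Set.inter_subset_right,
            (Set.ncard_le_ncard Set.inter_subset_right hfin).trans (Nat.le_succ _)⟩
      set E : Set X := ⋃ s ∈ T, (C ∩ sᶜ) with hE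
      have hEfin : E.Finite := Set.Finite.biUnion T.finite_toSet (fun s hs => (hEbound s hs).1)
      have hEcard : E.ncard ≤ k :=
        le_trans (pf13_ncard_biUnion_le T _) (Finset.sum_le_sum fun s hs => (hEbound s hs).2)
      have hCE : (C \ E).Nonempty := by
        rcases hCbig with hinf | hlt
        · exact (hinf.diff hEfin).nonempty
        · rw [Set.diff_nonempty]
          intro hsub
          have := Set.ncard_le_ncard hsub hEfin
          omega
      obtain ⟨p, hpC, hpE⟩ := hCE
      refine ⟨p, Set.mem_sInter.2 fun s hs => ?_⟩
      by_contra hps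
      exact hpE (Set.mem_biUnion (htf.mem_toFinset.2 hs) ⟨hpC, hps⟩)
    have hneBot : (Filter.generate G).NeBot := Filter.generate_neBot_iff.2 hFIP
    obtain ⟨𝒰, h𝒰⟩ := Filter.exists_ultrafilter_le (Filter.generate G)
    have hmemG : ∀ s ∈ G, s ∈ 𝒰 := fun s hs => h𝒰 (Filter.mem_generate_of_mem hs)
    have hfree : IsFreeUltrafilter 𝒰 := by
      intro x hx
      have h2 : {x}ᶜ ∈ 𝒰 := hmemG _ (Or.inr (Or.inr (by simp)))
      rw [hx] at h2
      simp at h2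
    obtain ⟨U, hU𝒰, bk, hmC⟩ := hRam 𝒰 hfree (fun x y => decide (dist x y ≤ R))
      (fun x y z t h => by simp only [h])
    have hnotsel : ¬ (∀ x ∈ U, ∀ y ∈ U, dist x y ≤ R → x = y) := by
      intro hs
      have : Uᶜ ∈ 𝒰 := hmemG _ (Or.inl (by rw [compl_compl]; exact hs))
      exact (Ultrafilter.compl_notMem_iff.2 hU𝒰) this
    push_neg at hnotsel
    obtain ⟨a, ha, b, hb, hab, habne⟩ := hnotsel
    have hcl : (ballClass R a)ᶜ ∈ 𝒰 := hmemG _ (Or.inr (Or.inl ⟨a, by rw [compl_compl]⟩))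
    obtain ⟨z, hzU, hz⟩ := Ultrafilter.nonempty_of_mem (Filter.inter_mem hU𝒰 hcl)
    have hz' : ¬ dist a z ≤ R := hz
    have hazne : a ≠ z := by
      intro h; subst h; simp [hRpos.le] at hz'
    have e1 : decide (dist a b ≤ R) = bk := hmC a ha b hb habne
    have e2 : decide (dist a z ≤ R) = bk := hmC a ha z hzU hazne
    rw [decide_eq_true hab] at e1
    rw [decide_eq_false hz'] at e2
    rw [← e1] at e2
    exact Bool.noConfusion e2
  · -- backward: condition → Ramsey
    intro hCond 𝒰 _hfree χ hχ
    have hnpos : 0 < n := by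
      obtain ⟨x, y, hxy⟩ := exists_pair_ne X
      rcases hscale' x y with h0 | ⟨j, _⟩
      · exact absurd (dist_eq_zero.1 h0) hxy
      · exact j.pos
    have htop : ∀ x y : X, dist x y ≤ r ⟨n-1, by omega⟩ := by
      intro x y
      rcases hscale' x y with h0 | ⟨j, hj⟩
      · rw [h0]; exact (hpos _).le
      · rw [← hj]
        exact hmono.monotone (by rw [Fin.le_def]; simp; omega)
    have hex : ∃ k : ℕ, ∃ h : k < n, ∃ x : X, ballClass (r ⟨k, h⟩) x ∈ 𝒰 := by
      obtain ⟨x⟩ : Nonempty X := inferInstance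
      refine ⟨n-1, by omega, x, ?_⟩
      have : ballClass (r ⟨n-1, by omega⟩) x = Set.univ :=
        Set.eq_univ_of_forall (fun y => htop x y)
      rw [this]; exact Filter.univ_mem
    set k0 := Nat.find hex with hk0
    obtain ⟨hk0n, x0, hC⟩ : ∃ h : k0 < n, ∃ x : X, ballClass (r ⟨k0, h⟩) x ∈ 𝒰 := Nat.find_spec hex
    set i0 : Fin n := ⟨k0, hk0n⟩ with hi0
    set C := ballClass (r i0) x0 with hCdef
    have hCpair : ∀ y ∈ C, ∀ z ∈ C, dist y z ≤ r i0 := fun y hy z hz => pf13_pair hultra hy hz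
    by_cases h0 : k0 = 0
    · refine ⟨C, hC, pf13_mono_of_const χ hχ (c := r i0) ?_⟩
      intro x hx y hy hxy
      have hle := hCpair x hx y hy
      rcases hscale' x y with hz | ⟨j, hj⟩
      · exact absurd (dist_eq_zero.1 hz) hxy
      · rw [← hj] at hle ⊢
        congr 1
        have h1 : j ≤ i0 := hmono.le_iff_le.1 hle
        rw [Fin.le_def] at h1
        apply Fin.ext
        simp only [hi0] at h1 ⊢
        omega
    · set jp : Fin n := ⟨k0 - 1, by omega⟩ with hjp
      obtain ⟨hfin, m, hbound⟩ := hCond jp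
      have hnoclass : ∀ x : X, ballClass (r jp) x ∉ 𝒰 := by
        intro x hx
        exact Nat.find_min hex (m := k0 - 1) (by omega) ⟨by omega, x, hx⟩
      set W := ⋃₀ {D : Set X | (∃ x, D = ballClass (r jp) x) ∧ D.Infinite} with hW
      have hWnot : W ∉ 𝒰 := by
        intro hWmem
        rw [Ultrafilter.finite_sUnion_mem_iff hfin] at hWmem
        obtain ⟨D, ⟨⟨x, rfl⟩, _⟩, hD⟩ := hWmem
        exact hnoclass x hD
      have hV : C ∩ Wᶜ ∈ 𝒰 := Filter.inter_mem hC (Ultrafilter.compl_mem_iff_notMem.2 hWnot)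
      letI : LinearOrder X := IsWellOrder.linearOrder WellOrderingRel
      set g : X → ℕ := fun x => (ballClass (r jp) x ∩ Set.Iio x).ncard with hg
      have hclassfin : ∀ x ∈ C ∩ Wᶜ, (ballClass (r jp) x).Finite := by
        intro x hx
        by_contra hinf
        exact hx.2 (Set.mem_sUnion.2 ⟨ballClass (r jp) x, ⟨⟨x, rfl⟩, hinf⟩,
          pf13_mem_self (hpos jp).le x⟩)
      have hgm : ∀ x ∈ C ∩ Wᶜ, g x < m := by
        intro x hx
        have hf := hclassfin x hx
        have h1 : g x ≤ (ballClass (r jp) x).ncard := Set.ncard_le_ncard Set.inter_subset_left hf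
        have h2 := hbound _ ⟨x, rfl⟩ hf
        omega
      have hsplit : (⋃ t ∈ Set.Iio m, {x ∈ C ∩ Wᶜ | g x = t}) ∈ 𝒰 := by
        have heq : (⋃ t ∈ Set.Iio m, {x ∈ C ∩ Wᶜ | g x = t}) = C ∩ Wᶜ := by
          ext x
          simp only [Set.mem_iUnion, Set.mem_setOf_eq, Set.mem_Iio, exists_prop]
          constructor
          · rintro ⟨t, _, hx, _⟩; exact hx
          · intro hx; exact ⟨g x, hgm x hx, hx, rfl⟩
        rw [heq]; exact hV
      rw [Ultrafilter.finite_biUnion_mem_iff (Set.finite_Iio m)] at hsplit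
      obtain ⟨t, _, hUt⟩ := hsplit
      refine ⟨{x ∈ C ∩ Wᶜ | g x = t}, hUt, pf13_mono_of_const χ hχ (c := r i0) ?_⟩
      have key : ∀ x ∈ {x ∈ C ∩ Wᶜ | g x = t}, ∀ y ∈ {x ∈ C ∩ Wᶜ | g x = t},
          y < x → ¬ dist x y ≤ r jp := by
        intro x hx y hy hyx hle
        have hBeq : ballClass (r jp) x = ballClass (r jp) y := pf13_class_eq hultra hle
        have hBf : (ballClass (r jp) x).Finite := hclassfin x hx.1
        have hss : (ballClass (r jp) y ∩ Set.Iio y) ⊂ (ballClass (r jp) x ∩ Set.Iio x) := by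
          rw [Set.ssubset_def]
          constructor
          · intro z hz
            rw [hBeq]
            exact ⟨hz.1, lt_trans hz.2 hyx⟩
          · intro hsub
            have hymem : y ∈ ballClass (r jp) x ∩ Set.Iio x := by
              rw [hBeq]
              exact ⟨pf13_mem_self (hpos jp).le y, hyx⟩
            exact absurd (hsub hymem).2 (lt_irrefl y)
        have hlt : g y < g x := Set.ncard_lt_ncard hss (hBf.subset Set.inter_subset_left)
        have hgx : g x = t := hx.2
        have hgy : g y = t := hy.2
        omega
      intro x hx y hy hxy
      have hgt : ¬ dist x y ≤ r jp := by
        rcases lt_trichotomy x y with h | h | h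
        · rw [dist_comm]; exact key y hy x hx h
        · exact absurd h hxy
        · exact key x hx y hy h
      have hle := hCpair x hx.1.1 y hy.1.1
      rcases hscale' x y with h0' | ⟨j, hj⟩
      · exact absurd (dist_eq_zero.1 h0') hxy
      · rw [← hj] at hle hgt ⊢
        congr 1
        have h1 : j ≤ i0 := hmono.le_iff_le.1 hle
        have h2 : ¬ j ≤ jp := fun h => hgt (hmono.monotone h)
        rw [Fin.le_def] at h1 h2
        apply Fin.ext
        simp only [hi0, hjp] at h1 h2 ⊢
        omega
end

section
/- Let 𝒰 be a metrically Ramsey ultrafilter on ℕ (with the metric d(x,y) = |x−y|) and let f : ℕ → ℕ be a mapping such that f(x) > x for each x ∈ ℕ. Then there exists a member U ∈ 𝒰 containing no subset of the form {a, a+x, a+f(x)} with a, x ∈ ℕ, x ≥ 1. -/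
/-- A `{0,1}`-coloring of pairs of naturals is isometric if it only depends on
the distance `|x - y|`. -/
def IsIsometricColoringNat (χ : ℕ → ℕ → Bool) : Prop :=
  ∀ x y z t : ℕ, dist x y = dist z t → χ x y = χ z t

/-- An ultrafilter on `ℕ` is metrically Ramsey (for the metric `|x - y|`) if
every isometric coloring has a monochrome member. -/
def MetricallyRamseyNat (𝒰 : Ultrafilter ℕ) : Prop :=
  ∀ χ : ℕ → ℕ → Bool, IsIsometricColoringNat χ →
    ∃ U ∈ 𝒰, ∃ k : Bool, ∀ x ∈ U, ∀ y ∈ U, x ≠ y → χ x y = k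

lemma natDist_cast_real (x y : ℕ) : (Nat.dist x y : ℝ) = dist x y := by
  rcases le_total x y with h | h
  · rw [Nat.dist_eq_sub_of_le h, Nat.dist_eq x y, abs_sub_comm,
      abs_of_nonneg (sub_nonneg.2 (Nat.cast_le.2 h : (x : ℝ) ≤ y))]
    push_cast [h]
    ring
  · rw [Nat.dist_eq_sub_of_le_right h, Nat.dist_eq x y,
      abs_of_nonneg (sub_nonneg.2 (Nat.cast_le.2 h : (y : ℝ) ≤ x))]
    push_cast [h]
    ring

/-- Proposition 3.1: if `𝒰` is a metrically Ramsey ultrafilter on `ℕ` and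
`f x > x` for all `x`, then some member of `𝒰` contains no subset of the form
`{a, a + x, a + f x}` with `x ≥ 1`. -/
theorem stmt14 (𝒰 : Ultrafilter ℕ) (hfree : ∀ n : ℕ, 𝒰 ≠ pure n)
    (hMR : MetricallyRamseyNat 𝒰) (f : ℕ → ℕ) (hf : ∀ x : ℕ, x < f x) :
    ∃ U ∈ 𝒰, ∀ a x : ℕ, 1 ≤ x → ¬ ({a, a + x, a + f x} : Set ℕ) ⊆ U := by
  classical
  -- iterates of f are strictly increasing, hence injective in the exponent
  have horb : ∀ y : ℕ, StrictMono (fun a => f^[a] y) := by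
    intro y
    apply strictMono_nat_of_lt_succ
    intro a
    simpa [Function.iterate_succ_apply'] using hf (f^[a] y)
  have hinj : ∀ y a b, f^[a] y = f^[b] y → a = b := fun y a b h => (horb y).injective h
  -- "orbits meet"
  let Meets : ℕ → ℕ → Prop := fun x y => ∃ i j, f^[i] x = f^[j] y
  have hself : ∀ x, Meets x x := fun x => ⟨0, 0, rfl⟩
  have hstep : ∀ x y, Meets x y ↔ Meets (f x) y := by
    intro x y
    constructor
    · rintro ⟨i, j, h⟩
      exact ⟨i, j + 1, by
        rw [← Function.iterate_succ_apply f i x, Function.iterate_succ_apply' f i x,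
          Function.iterate_succ_apply' f j y, h]⟩
    · rintro ⟨i, j, h⟩
      exact ⟨i + 1, j, by rw [Function.iterate_succ_apply]; exact h⟩
  -- parity is well defined
  have key : ∀ x r i j i' j', f^[i] x = f^[j] r → f^[i'] x = f^[j'] r →
      i' + j = i + j' := by
    intro x r i j i' j' h1 h2
    have e1 : f^[i' + i] x = f^[i' + j] r := by
      rw [Function.iterate_add_apply, Function.iterate_add_apply, h1]
    have e2 : f^[i + i'] x = f^[i + j'] r := by
      rw [Function.iterate_add_apply, Function.iterate_add_apply, h2]
    have : f^[i' + j] r = f^[i + j'] r := by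
      rw [← e1, ← e2, Nat.add_comm i i']
    exact hinj r _ _ this
  let m : ℕ → ℕ := fun x => sInf {y | Meets x y}
  have hmem : ∀ x, Meets x (m x) := by
    intro x
    have h : sInf {y | Meets x y} ∈ {y | Meets x y} := Nat.sInf_mem ⟨x, hself x⟩
    exact h
  have hmf : ∀ x, m (f x) = m x := by
    intro x
    have : {y | Meets (f x) y} = {y | Meets x y} := by
      ext y; exact (hstep x y).symm
    simp only [m, this]
  -- the 2-coloring of distances
  let c : ℕ → Bool := fun x =>
    decide (((Classical.choose (hmem x)) +
      (Classical.choose (Classical.choose_spec (hmem x)))) % 2 = 0)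
  have hc : ∀ x, c (f x) = ! c x := by
    intro x
    obtain ⟨i, hi⟩ : ∃ i, ∃ j, f^[i] x = f^[j] (m x) := hmem x
    have hi' := Classical.choose_spec (hmem x)
    set i := Classical.choose (hmem x)
    set j := Classical.choose (Classical.choose_spec (hmem x))
    have hij : f^[i] x = f^[j] (m x) := Classical.choose_spec (Classical.choose_spec (hmem x))
    have hi2' := Classical.choose_spec (hmem (f x))
    set i' := Classical.choose (hmem (f x))
    set j' := Classical.choose (Classical.choose_spec (hmem (f x)))
    have hij' : f^[i'] (f x) = f^[j'] (m (f x)) :=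
      Classical.choose_spec (Classical.choose_spec (hmem (f x)))
    have hij'' : f^[i' + 1] x = f^[j'] (m x) := by
      rw [Function.iterate_succ_apply, hij', hmf]
    have e : (i' + 1) + j = i + j' := key x (m x) i j (i' + 1) j' hij hij''
    have hpar : ((i' + j') % 2 = 0) ↔ ¬ ((i + j) % 2 = 0) := by omega
    have e1 : c (f x) = decide ((i' + j') % 2 = 0) := rfl
    have e2 : c x = decide ((i + j) % 2 = 0) := rfl
    rw [e1, e2, decide_eq_decide.mpr hpar, decide_not]
  -- the isometric coloring
  let χ : ℕ → ℕ → Bool := fun u v => c (Nat.dist u v)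
  have hiso : IsIsometricColoringNat χ := by
    intro x y z t h
    have : (Nat.dist x y : ℝ) = (Nat.dist z t : ℝ) := by
      rw [natDist_cast_real, natDist_cast_real, h]
    have : Nat.dist x y = Nat.dist z t := Nat.cast_injective this
    simp only [χ, this]
  obtain ⟨U, hU, k, hmono⟩ := hMR χ hiso
  refine ⟨U, hU, ?_⟩
  intro a x hx hsub
  have ha : a ∈ U := hsub (by simp)
  have hax : a + x ∈ U := hsub (by simp)
  have hafx : a + f x ∈ U := hsub (by simp)
  have h1 : χ a (a + x) = k := hmono a ha (a + x) hax (by omega)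
  have h2 : χ a (a + f x) = k := hmono a ha (a + f x) hafx (by have := hf x; omega)
  have d1 : Nat.dist a (a + x) = x := by
    rw [Nat.dist_eq_sub_of_le (by omega)]; omega
  have d2 : Nat.dist a (a + f x) = f x := by
    rw [Nat.dist_eq_sub_of_le (by omega)]; omega
  have : c x = k := by simpa [χ, d1] using h1
  have h2' : c (f x) = k := by simpa [χ, d2] using h2
  rw [hc x, this] at h2'
  exact (Bool.not_ne_self k) h2'
end

section
/- Every metrically Ramsey ultrafilter 𝒰 on ℕ (with the metric d(x,y) = |x−y|) has a member U ∈ 𝒰 containing no three-term arithmetic progression, i.e., no subset of the form {a, a+x, a+2x} with a, x ∈ ℕ, x ≥ 1. -/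
lemma cast_natDist (x y : ℕ) : ((Nat.dist x y : ℕ) : ℝ) = |(x : ℝ) - y| := by
  rcases le_total x y with h | h
  · rw [abs_sub_comm, abs_of_nonneg (by exact sub_nonneg.mpr (Nat.cast_le.mpr h)),
      Nat.dist_eq_sub_of_le h, Nat.cast_sub h]
  · rw [abs_of_nonneg (by exact sub_nonneg.mpr (Nat.cast_le.mpr h)),
      Nat.dist_eq_sub_of_le_right h, Nat.cast_sub h]

lemma val2_double (x : ℕ) (hx : x ≠ 0) :
    padicValNat 2 (2 * x) = padicValNat 2 x + 1 := by
  rw [padicValNat.mul (by norm_num) hx, padicValNat.self (by norm_num)]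
  omega

/-- Every metrically Ramsey ultrafilter on `ℕ` has a member containing no
three-term arithmetic progression `{a, a + x, a + 2x}` with `x ≥ 1`. -/
theorem stmt15 (𝒰 : Ultrafilter ℕ) (hfree : ∀ n : ℕ, 𝒰 ≠ pure n)
    (hMR : MetricallyRamseyNat 𝒰) :
    ∃ U ∈ 𝒰, ∀ a x : ℕ, 1 ≤ x → ¬ ({a, a + x, a + 2 * x} : Set ℕ) ⊆ U := by
  set χ : ℕ → ℕ → Bool := fun x y => decide (padicValNat 2 (Nat.dist x y) % 2 = 0) with hχ
  have hiso : IsIsometricColoringNat χ := by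
    intro x y z t h
    rw [Nat.dist_eq, Nat.dist_eq, ← cast_natDist, ← cast_natDist] at h
    have : Nat.dist x y = Nat.dist z t := Nat.cast_injective h
    simp [hχ, this]
  obtain ⟨U, hU, k, hk⟩ := hMR χ hiso
  refine ⟨U, hU, fun a x hx hsub => ?_⟩
  have h1 : a ∈ U := hsub (by simp)
  have h2 : a + x ∈ U := hsub (by simp)
  have h3 : a + 2 * x ∈ U := hsub (by right; right; rfl)
  have e1 : χ a (a + x) = k := hk a h1 (a + x) h2 (by omega)
  have e2 : χ a (a + 2 * x) = k := hk a h1 (a + 2 * x) h3 (by omega)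
  have d1 : Nat.dist a (a + x) = x := by
    rw [Nat.dist_eq_sub_of_le (by omega)]; omega
  have d2 : Nat.dist a (a + 2 * x) = 2 * x := by
    rw [Nat.dist_eq_sub_of_le (by omega)]; omega
  rw [hχ] at e1 e2
  simp only [d1, d2] at e1 e2
  rw [val2_double x (by omega)] at e2
  have := e1.trans e2.symm
  simp only [decide_eq_decide] at this
  omega
end

section
/- Let f : ℕ → ℕ be a mapping such that f(x) > x for each x ∈ ℕ. Then ℕ can be partitioned as ℕ = A₁ ∪ A₂ into two disjoint sets such that f(A₁) ⊆ A₂ and f(A₂) ⊆ A₁. -/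
open Classical Function

/-- least element whose f-orbit merges with that of n -/
noncomputable def myroot (f : ℕ → ℕ) (n : ℕ) : ℕ :=
  Nat.find (p := fun m => ∃ i j, f^[i] n = f^[j] m) ⟨n, 0, 0, rfl⟩

lemma myroot_spec (f : ℕ → ℕ) (n : ℕ) : ∃ i j, f^[i] n = f^[j] (myroot f n) :=
  Nat.find_spec (p := fun m => ∃ i j, f^[i] n = f^[j] m) ⟨n, 0, 0, rfl⟩

noncomputable def mycol (f : ℕ → ℕ) (n : ℕ) : Bool :=
  decide ((Nat.find (p := fun s => ∃ i j, i + j = s ∧ f^[i] n = f^[j] (myroot f n))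
    (by obtain ⟨i, j, h⟩ := myroot_spec f n; exact ⟨i + j, i, j, rfl, h⟩)) % 2 = 0)

lemma iter_strictMono (f : ℕ → ℕ) (hf : ∀ x, x < f x) (r : ℕ) :
    StrictMono (fun a => f^[a] r) := by
  apply strictMono_nat_of_lt_succ
  intro a
  simp only [Function.iterate_succ_apply']
  exact hf _

lemma parity_key (f : ℕ → ℕ) (hf : ∀ x, x < f x) {n r i j i' j' : ℕ}
    (h1 : f^[i] n = f^[j] r) (h2 : f^[i'] n = f^[j'] r) :
    (i + j) % 2 = (i' + j') % 2 := by
  have e1 : f^[i' + j] r = f^[i' + i] n := by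
    rw [Function.iterate_add_apply, Function.iterate_add_apply, h1]
  have e2 : f^[i + j'] r = f^[i + i'] n := by
    rw [Function.iterate_add_apply, Function.iterate_add_apply, h2]
  have : f^[i' + j] r = f^[i + j'] r := by rw [e1, e2, Nat.add_comm i i']
  have := (iter_strictMono f hf r).injective this
  omega

lemma myroot_f (f : ℕ → ℕ) (n : ℕ) : myroot f (f n) = myroot f n := by
  apply le_antisymm
  · obtain ⟨i, j, h⟩ := myroot_spec f n
    exact Nat.find_le ⟨i, j + 1, by
      simp only [← Function.iterate_succ_apply, Function.iterate_succ_apply', h]⟩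
  · obtain ⟨i, j, h⟩ := myroot_spec f (f n)
    exact Nat.find_le ⟨i + 1, j, by rw [Function.iterate_succ_apply]; exact h⟩

lemma mycol_f (f : ℕ → ℕ) (hf : ∀ x, x < f x) (n : ℕ) :
    mycol f (f n) = !mycol f n := by
  unfold mycol
  obtain ⟨i, j, hij, h⟩ := Nat.find_spec
    (p := fun s => ∃ i j, i + j = s ∧ f^[i] n = f^[j] (myroot f n))
    (by obtain ⟨i, j, h⟩ := myroot_spec f n; exact ⟨i + j, i, j, rfl, h⟩)
  obtain ⟨i', j', hij', h'⟩ := Nat.find_spec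
    (p := fun s => ∃ i j, i + j = s ∧ f^[i] (f n) = f^[j] (myroot f (f n)))
    (by obtain ⟨i, j, h⟩ := myroot_spec f (f n); exact ⟨i + j, i, j, rfl, h⟩)
  rw [myroot_f f n] at h'
  rw [← Function.iterate_succ_apply] at h'
  have key : (i + j) % 2 = (i' + 1 + j') % 2 := parity_key f hf h h'
  rw [← hij, ← hij']
  rcases Nat.mod_two_eq_zero_or_one (i + j) with h0 | h0 <;>
    rcases Nat.mod_two_eq_zero_or_one (i' + j') with h1 | h1 <;>
      simp [h0, h1] <;> omega

/-- If `f : ℕ → ℕ` satisfies `f x > x` for all `x`, then `ℕ` can be partitioned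
into two disjoint sets `A₁, A₂` with `f '' A₁ ⊆ A₂` and `f '' A₂ ⊆ A₁`. -/
theorem stmt16 (f : ℕ → ℕ) (hf : ∀ x : ℕ, x < f x) :
    ∃ A₁ A₂ : Set ℕ, A₁ ∪ A₂ = Set.univ ∧ A₁ ∩ A₂ = ∅ ∧
      f '' A₁ ⊆ A₂ ∧ f '' A₂ ⊆ A₁ := by
  refine ⟨{n | mycol f n = true}, {n | mycol f n = false}, ?_, ?_, ?_, ?_⟩
  · ext n; simp
  · ext n; simp
  · rintro y ⟨x, hx, rfl⟩
    simp only [Set.mem_setOf_eq] at hx ⊢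
    simp [mycol_f f hf, hx]
  · rintro y ⟨x, hx, rfl⟩
    simp only [Set.mem_setOf_eq] at hx ⊢
    simp [mycol_f f hf, hx]
end

section
/- Let 𝒰 be a metrically Ramsey ultrafilter on ℕ (with the metric d(x,y) = |x−y|). If there exists U ∈ 𝒰 such that |x−y| ≠ |z−t| for all distinct two-element subsets {x,y}, {z,t} of U, then 𝒰 is a Ramsey ultrafilter. -/
/-- An ultrafilter on `ℕ` is Ramsey if every symmetric `{0,1}`-coloring of pairs
has a monochrome member. -/
def IsRamseyColoringProperty (𝒰 : Ultrafilter ℕ) : Prop :=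
  ∀ χ : ℕ → ℕ → Bool, (∀ a b, χ a b = χ b a) →
    ∃ U ∈ 𝒰, ∃ k : Bool, ∀ x ∈ U, ∀ y ∈ U, x ≠ y → χ x y = k

/-- If a metrically Ramsey ultrafilter on `ℕ` has a member on which all pair
distances are distinct, then it is a Ramsey ultrafilter. -/
theorem stmt17 (𝒰 : Ultrafilter ℕ) (hfree : ∀ n : ℕ, 𝒰 ≠ pure n)
    (hMR : MetricallyRamseyNat 𝒰)
    (hdistinct : ∃ U ∈ 𝒰, ∀ x ∈ U, ∀ y ∈ U, ∀ z ∈ U, ∀ t ∈ U,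
      x ≠ y → z ≠ t → ({x, y} : Set ℕ) ≠ {z, t} → dist x y ≠ dist z t) :
    IsRamseyColoringProperty 𝒰 := by
  classical
  obtain ⟨U, hU, hUd⟩ := hdistinct
  intro χ hsym
  -- define an isometric coloring via a function of the distance
  set g : ℝ → Bool := fun r =>
    if h : ∃ p : ℕ × ℕ, p.1 ∈ U ∧ p.2 ∈ U ∧ p.1 ≠ p.2 ∧ dist p.1 p.2 = r
    then χ h.choose.1 h.choose.2 else false with hg
  have hiso : IsIsometricColoringNat (fun x y => g (dist x y)) := by
    intro x y z t h
    simp only [h]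
  obtain ⟨V, hV, k, hk⟩ := hMR _ hiso
  refine ⟨U ∩ V, ?_, k, ?_⟩
  · exact (Ultrafilter.mem_coe).2 (Filter.inter_mem hU hV)
  · intro x hx y hy hxy
    have hgxy : g (dist x y) = χ x y := by
      have hex : ∃ p : ℕ × ℕ, p.1 ∈ U ∧ p.2 ∈ U ∧ p.1 ≠ p.2 ∧
          dist p.1 p.2 = dist x y := ⟨(x, y), hx.1, hy.1, hxy, rfl⟩
      obtain ⟨ha, hb, hab, hd⟩ := hex.choose_spec
      have hset : ({hex.choose.1, hex.choose.2} : Set ℕ) = {x, y} := by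
        by_contra hne
        exact hUd _ ha _ hb _ hx.1 _ hy.1 hab hxy hne hd
      rw [hg]
      simp only [dif_pos hex]
      rcases (Set.pair_eq_pair_iff.1 hset) with ⟨h1, h2⟩ | ⟨h1, h2⟩
      · rw [h1, h2]
      · rw [h1, h2, hsym]
    rw [← hgxy]
    exact hk x hx.2 y hy.2 hxy
end
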